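/- arXiv:2507.06851 — 3 statements merged into one kernel-verified Lean document; each statement's English description precedes it below -/
import Mathlib

section
/- Let (ι, 𝔩, G) be a one-object symmetric set, (V_l)_{l∈L} a Banach space assignment, (T, ⊗) a G-symmetric tensor product of V over (ι, 𝔩, G), (Ω, 𝓕, P) a probability space, X a real Banach space, and p ∈ [1, ∞). Suppose f : Ω × V^{×ι} → X is such that f(ω, ·) is a G-symmetric continuous multilinear map for each ω ∈ Ω, that for each v ∈ V^{×ι} the map ω ↦ f(ω, v) is strongly measurable with ∫ ‖f(ω,v)‖_X^p dP(ω) < ∞, and that the resulting multilinear map V^{×ι} → L^p(Ω; X), v ↦ [f(·, v)], is continuous. For each ω let f̃(ω, ·) : T → X be the unique continuous linear map with f̃(ω, ·) ∘ ⊗ = f(ω, ·), and let g : T → L^p(Ω; X) be the unique continuous linear map with g ∘ ⊗ = (v ↦ [f(·, v)]) provided by the universal property. Then for every u ∈ T the map ω ↦ f̃(ω, u) is P-almost surely equal to (a representative of) g(u); in particular ω ↦ f̃(ω, u) is p-integrable and u ↦ [f̃(·, u)] is a continuous linear map T → L^p(Ω; X) factoring the family (v ↦ [f(·, v)]) through ⊗.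 -/
open scoped BigOperators

namespace SymTensor

universe u v

/-- A permutation of the index set preserves the labels. -/
def LabPres {ι L : Type} (lab : ι → L) (σ : Equiv.Perm ι) : Prop :=
  ∀ i, lab (σ i) = lab i

/-- The action `(σ · v) i = v (σ⁻¹ i)` of a label-preserving permutation on
`V^{×ι} = ∏ i, V (lab i)`. -/
def permAct {ι L : Type} (lab : ι → L) (V : L → Type u) (σ : Equiv.Perm ι)
    (hσ : LabPres lab σ) (v : ∀ i, V (lab i)) : ∀ i, V (lab i) := fun i =>
  cast (congrArg V ((hσ (σ.symm i)).symm.trans (congrArg lab (σ.apply_symm_apply i))))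
    (v (σ.symm i))

/-- A `G`-symmetric function on `V^{×ι}`. -/
def IsSymFun {ι L : Type} (lab : ι → L) (V : L → Type u) {Z : Type v}
    (G : Subgroup (Equiv.Perm ι)) (f : (∀ i, V (lab i)) → Z) : Prop :=
  ∀ σ ∈ G, ∀ hσ : LabPres lab σ, ∀ v, f (permAct lab V σ hσ v) = f v

variable {ι : Type} [Fintype ι] {L : Type}

/-- Candidate data for a symmetric tensor product: a Banach space `T` together with a
continuous multilinear map `⊗ : V^{×ι} → T`. -/
structure SymTPCandidate (lab : ι → L) (V : L → Type u)
    [∀ l, NormedAddCommGroup (V l)] [∀ l, NormedSpace ℝ (V l)] : Type (u + 1) where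
  T : Type u
  [instN : NormedAddCommGroup T]
  [instS : NormedSpace ℝ T]
  [instC : CompleteSpace T]
  tp : ContinuousMultilinearMap ℝ (fun i => V (lab i)) T

attribute [instance] SymTPCandidate.instN SymTPCandidate.instS SymTPCandidate.instC

/-- `(T, ⊗)` is a `G`-symmetric tensor product of the Banach space assignment `V` over
the one-object symmetric set `(ι, lab, G)`: `⊗` is a `G`-symmetric continuous
multilinear map of norm at most `1`, and every `G`-symmetric continuous multilinear map
into a complete locally convex topological vector space `Z` factors uniquely and
continuously through it, with equality of norms when `Z` is a Banach space. -/
structure IsSymTensorProduct (lab : ι → L) (V : L → Type u)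
    [∀ l, NormedAddCommGroup (V l)] [∀ l, NormedSpace ℝ (V l)] [∀ l, CompleteSpace (V l)]
    (G : Subgroup (Equiv.Perm ι)) (P : SymTPCandidate lab V) : Prop where
  norm_tp : ‖P.tp‖ ≤ 1
  symm_tp : IsSymFun lab V G ⇑P.tp
  lift :
    ∀ (Z : Type v) [AddCommGroup Z] [UniformSpace Z] [IsUniformAddGroup Z] [Module ℝ Z]
      [ContinuousSMul ℝ Z] [LocallyConvexSpace ℝ Z] [CompleteSpace Z]
      (f : ContinuousMultilinearMap ℝ (fun i => V (lab i)) Z),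
      IsSymFun lab V G ⇑f → ∃! F : P.T →L[ℝ] Z, ∀ v, F (P.tp v) = f v
  lift_norm :
    ∀ (Z : Type v) [NormedAddCommGroup Z] [NormedSpace ℝ Z] [CompleteSpace Z]
      (f : ContinuousMultilinearMap ℝ (fun i => V (lab i)) Z),
      IsSymFun lab V G ⇑f → ∀ F : P.T →L[ℝ] Z, (∀ v, F (P.tp v) = f v) → ‖F‖ = ‖f‖

open MeasureTheory
open scoped ENNReal

/-- Auxiliary: the span of the range of `tp` is dense, by uniqueness in the
universal property. -/
theorem span_range_tp_dense {ι : Type} [Fintype ι] {L : Type} (lab : ι → L)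
    (V : L → Type u) [∀ l, NormedAddCommGroup (V l)] [∀ l, NormedSpace ℝ (V l)]
    [∀ l, CompleteSpace (V l)]
    (G : Subgroup (Equiv.Perm ι)) (P : SymTPCandidate lab V)
    (hP : IsSymTensorProduct.{u, v} lab V G P) :
    (Submodule.span ℝ (Set.range ⇑P.tp)).topologicalClosure = ⊤ := by
  classical
  set S : Submodule ℝ P.T := Submodule.span ℝ (Set.range ⇑P.tp) with hSdef
  have hdense : S.topologicalClosure = ⊤ := by
    by_contra hne
    obtain ⟨x, hx⟩ : ∃ x : P.T, x ∉ S.topologicalClosure := by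
      by_contra h
      push_neg at h
      exact hne (Submodule.eq_top_iff'.2 h)
    obtain ⟨φ, u, hu, hφ⟩ :=
      geometric_hahn_banach_point_closed (t := (S.topologicalClosure : Set P.T))
        (S.topologicalClosure.convex) S.isClosed_topologicalClosure hx
    -- φ is bounded below by u on a subspace, hence vanishes on it
    have hφ0 : ∀ b ∈ S.topologicalClosure, φ b = 0 := by
      intro b hb
      by_contra hb0
      have h1 : ∀ t : ℝ, u < t * φ b := by
        intro t
        have := hφ (t • b) (Submodule.smul_mem _ t hb)
        simpa using this
      rcases lt_or_gt_of_ne hb0 with hneg | hpos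
      · have := h1 ((u - 1) / φ b)
        rw [div_mul_cancel₀ _ hb0] at this
        linarith
      · have := h1 ((u - 1) / φ b)
        rw [div_mul_cancel₀ _ hb0] at this
        linarith
    -- φ and 0 both lift the zero multilinear map, so φ = 0 by uniqueness
    have hsym0 : IsSymFun lab V G
        ⇑(0 : ContinuousMultilinearMap ℝ (fun i => V (lab i)) (ULift.{v} ℝ)) := by
      intro σ _ _ v; rfl
    obtain ⟨F, _, hFuniq⟩ := hP.lift (ULift.{v} ℝ) 0 hsym0
    set e : ULift.{v} ℝ ≃L[ℝ] ℝ := ContinuousLinearEquiv.ulift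
    set φ' : P.T →L[ℝ] ULift.{v} ℝ := (e.symm : ℝ →L[ℝ] ULift.{v} ℝ).comp φ with hφ'def
    have hφtp : ∀ v, φ' (P.tp v) =
        (0 : ContinuousMultilinearMap ℝ (fun i => V (lab i)) (ULift.{v} ℝ)) v := by
      intro v
      have : P.tp v ∈ S.topologicalClosure :=
        Submodule.le_topologicalClosure S (Submodule.subset_span ⟨v, rfl⟩)
      have h0 : φ (P.tp v) = 0 := hφ0 _ this
      simp [hφ'def, h0]
    have h0tp : ∀ v, (0 : P.T →L[ℝ] ULift.{v} ℝ) (P.tp v) =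
        (0 : ContinuousMultilinearMap ℝ (fun i => V (lab i)) (ULift.{v} ℝ)) v := by
      intro v; rfl
    have hφ'0 : φ' = (0 : P.T →L[ℝ] ULift.{v} ℝ) :=
      (hFuniq φ' hφtp).trans (hFuniq 0 h0tp).symm
    have hφx : φ x = 0 := by
      have := congrArg (fun F : P.T →L[ℝ] ULift.{v} ℝ => e (F x)) hφ'0
      simpa [hφ'def] using this
    have : u < 0 := by
      have := hφ 0 (Submodule.zero_mem _)
      simpa using this
    rw [hφx] at hu; linarith
  exact hdense

/-- The universal property in `L^p`.
Let `(T, ⊗)` be a `G`-symmetric tensor product, `(Ω, 𝓕, P)` a probability space, `X` a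
Banach space and `p ∈ [1, ∞)`.  Suppose `f(ω, ·)` is a `G`-symmetric continuous
multilinear map for each `ω`, that `ω ↦ f(ω, v)` is in `L^p` for each `v`, and that the
multilinear map `v ↦ [f(·, v)] ∈ L^p(Ω; X)` is continuous.  If `f̃(ω, ·)` factors
`f(ω, ·)` through `⊗` and `g` factors `v ↦ [f(·, v)]` through `⊗`, then for every
`u ∈ T` the map `ω ↦ f̃(ω, u)` is `P`-a.e. equal to `g u`; in particular it is
`p`-integrable and `u ↦ [f̃(·, u)]` is the continuous linear map factoring the family
through `⊗`. -/
theorem symTensorProduct_lp {ι : Type} [Fintype ι] {L : Type} (lab : ι → L)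
    (V : L → Type u) [∀ l, NormedAddCommGroup (V l)] [∀ l, NormedSpace ℝ (V l)]
    [∀ l, CompleteSpace (V l)]
    (G : Subgroup (Equiv.Perm ι)) (hG : ∀ σ ∈ G, LabPres lab σ)
    (P : SymTPCandidate lab V) (hP : IsSymTensorProduct lab V G P)
    {Ω : Type u} [MeasurableSpace Ω] (μ : Measure Ω) [IsProbabilityMeasure μ]
    (X : Type u) [NormedAddCommGroup X] [NormedSpace ℝ X] [CompleteSpace X]
    (p : ℝ≥0∞) [hp1 : Fact (1 ≤ p)] (hptop : p ≠ ⊤)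
    (f : Ω → ContinuousMultilinearMap ℝ (fun i => V (lab i)) X)
    (hsymm : ∀ ω, IsSymFun lab V G ⇑(f ω))
    (hmem : ∀ v : ∀ i, V (lab i), MemLp (fun ω => f ω v) p μ)
    (hcont : Continuous fun v : ∀ i, V (lab i) =>
      MemLp.toLp (fun ω => f ω v) (hmem v))
    (ftilde : Ω → P.T →L[ℝ] X) (hft : ∀ ω v, ftilde ω (P.tp v) = f ω v)
    (g : P.T →L[ℝ] Lp X p μ)
    (hg : ∀ v : ∀ i, V (lab i), g (P.tp v) = MemLp.toLp (fun ω => f ω v) (hmem v)) :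
    ∀ x : P.T, MemLp (fun ω => ftilde ω x) p μ ∧
      (fun ω => ftilde ω x) =ᵐ[μ] ⇑(g x) := by
  classical
  -- The span of the range of `tp` is dense in `T`, by uniqueness in the universal property.
  set S : Submodule ℝ P.T := Submodule.span ℝ (Set.range ⇑P.tp) with hSdef
  have hdense : S.topologicalClosure = ⊤ := span_range_tp_dense lab V G P hP
  -- Key property on the span
  have hspan : ∀ x ∈ S, (fun ω => ftilde ω x) =ᵐ[μ] ⇑(g x) := by
    intro x hx
    induction hx using Submodule.span_induction with
    | mem x hxr =>
      obtain ⟨v, rfl⟩ := hxr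
      have h1 : (fun ω => ftilde ω (P.tp v)) = fun ω => f ω v := by
        funext ω; exact hft ω v
      rw [h1, hg v]
      exact ((hmem v).coeFn_toLp).symm
    | zero =>
      have : ⇑(g (0 : P.T)) =ᵐ[μ] (0 : Ω → X) := by rw [map_zero]; exact MeasureTheory.Lp.coeFn_zero X p μ
      filter_upwards [this] with ω hω
      simp [hω]
    | add x y hxm hym hx hy =>
      have hadd : ⇑(g (x + y)) =ᵐ[μ] ⇑(g x) + ⇑(g y) := by
        rw [map_add]; exact MeasureTheory.Lp.coeFn_add _ _
      filter_upwards [hx, hy, hadd] with ω h1 h2 h3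
      have h4 : (ftilde ω) (x + y) = ftilde ω x + ftilde ω y := map_add _ _ _
      rw [h4, h1, h2, h3, Pi.add_apply]
    | smul a x hxm hx =>
      have hsmul : ⇑(g (a • x)) =ᵐ[μ] a • ⇑(g x) := by
        rw [g.map_smul]; exact MeasureTheory.Lp.coeFn_smul _ _
      filter_upwards [hx, hsmul] with ω h1 h2
      rw [(ftilde ω).map_smul, h1, h2, Pi.smul_apply]
  -- Extend to all of `T` by density
  have key : ∀ x : P.T, (fun ω => ftilde ω x) =ᵐ[μ] ⇑(g x) := by
    intro x
    have hxcl : x ∈ closure (S : Set P.T) := by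
      have : x ∈ S.topologicalClosure := hdense ▸ Submodule.mem_top
      exact this
    obtain ⟨w, hwS, hwlim⟩ := mem_closure_iff_seq_limit.1 hxcl
    -- g (w n) → g x in Lp
    have hgTendsto : Filter.Tendsto (fun n => g (w n)) Filter.atTop (nhds (g x)) :=
      (g.continuous.tendsto x).comp hwlim
    have hinm : MeasureTheory.TendstoInMeasure μ (fun n => ⇑(g (w n))) Filter.atTop ⇑(g x) :=
      MeasureTheory.tendstoInMeasure_of_tendsto_Lp hgTendsto
    obtain ⟨ns, hns⟩ := hinm.exists_seq_tendsto_ae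
    have hae : ∀ᵐ ω ∂μ, ∀ k, ftilde ω (w (ns k)) = g (w (ns k)) ω :=
      MeasureTheory.ae_all_iff.2 fun k => hspan (w (ns k)) (hwS (ns k))
    filter_upwards [hns.2, hae] with ω hω1 hω2
    have hlim1 : Filter.Tendsto (fun k => ftilde ω (w (ns k))) Filter.atTop
        (nhds (ftilde ω x)) :=
      ((ftilde ω).continuous.tendsto x).comp (hwlim.comp hns.1.tendsto_atTop)
    have hlim2 : Filter.Tendsto (fun k => ftilde ω (w (ns k))) Filter.atTop
        (nhds (g x ω)) := by
      have : (fun k => ftilde ω (w (ns k))) = fun k => g (w (ns k)) ω := by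
        funext k; exact hω2 k
      rw [this]; exact hω1
    exact tendsto_nhds_unique hlim1 hlim2
  intro x
  exact ⟨(MeasureTheory.Lp.memLp (g x)).ae_eq (key x).symm, key x⟩

end SymTensor
end

section
/- Let H = ⨁_{n∈ℕ} H_n be an ℕ-graded bialgebra over ℝ whose degree-zero component H_0 is, as an ℝ-algebra, a free commutative (polynomial) algebra on finitely many generators g_1, …, g_d, each of which is primitive in H. Then H admits an antipode; that is, there exists a linear map S : H → H with m ∘ (S ⊗ id) ∘ Δ = η ∘ ε = m ∘ (id ⊗ S) ∘ Δ, so H is a Hopf algebra. -/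
open scoped TensorProduct

set_option linter.unusedSectionVars false
set_option maxHeartbeats 1000000

namespace GradedAntipodeAux

variable {H : Type*} [Ring H] [Bialgebra ℝ H]

/-- Convolution product on `End(H)`. -/
noncomputable def conv (f g : H →ₗ[ℝ] H) : H →ₗ[ℝ] H :=
  (LinearMap.mul' ℝ H).comp ((TensorProduct.map f g).comp (Coalgebra.comul (R := ℝ)))

/-- Convolution unit. -/
noncomputable def cunit : H →ₗ[ℝ] H :=
  (Algebra.linearMap ℝ H).comp (Coalgebra.counit (R := ℝ))

lemma conv_repr (f g : H →ₗ[ℝ] H) {ι : Type*} (a : H) (r : Coalgebra.Repr ℝ a ι) :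
    conv f g a = ∑ i ∈ r.index, f (r.left i) * g (r.right i) := by
  simp [conv, ← r.eq, map_sum]

lemma cunit_apply (a : H) : cunit a = (Coalgebra.counit (R := ℝ) a) • (1 : H) := by
  simp [cunit, Algebra.algebraMap_eq_smul_one]

lemma conv_cunit_left (f : H →ₗ[ℝ] H) : conv cunit f = f := by
  ext a
  obtain r := Coalgebra.Repr.arbitrary ℝ a
  rw [conv_repr _ _ _ r]
  have h := Coalgebra.sum_counit_tmul_map_eq (R := ℝ) (f := f) (a := a) (repr := r)
  have h2 := congrArg (TensorProduct.lid ℝ H).toLinearMap h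
  simp only [map_sum, LinearEquiv.coe_coe, TensorProduct.lid_tmul, one_smul] at h2
  calc ∑ i ∈ r.index, cunit (r.left i) * f (r.right i)
      = ∑ i ∈ r.index, Coalgebra.counit (R := ℝ) (r.left i) • f (r.right i) := by
        simp [cunit_apply, smul_mul_assoc]
    _ = f a := by rw [h2]

lemma conv_cunit_right (f : H →ₗ[ℝ] H) : conv f cunit = f := by
  ext a
  obtain r := Coalgebra.Repr.arbitrary ℝ a
  rw [conv_repr _ _ _ r]
  have h := Coalgebra.sum_map_tmul_counit_eq (R := ℝ) (f := f) (a := a) (repr := r)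
  have h2 := congrArg (TensorProduct.rid ℝ H).toLinearMap h
  simp only [map_sum, LinearEquiv.coe_coe, TensorProduct.rid_tmul, one_smul] at h2
  calc ∑ i ∈ r.index, f (r.left i) * cunit (r.right i)
      = ∑ i ∈ r.index, Coalgebra.counit (R := ℝ) (r.right i) • f (r.left i) := by
        simp [cunit_apply, mul_smul_comm]
    _ = f a := by rw [h2]

lemma conv_assoc (f g h : H →ₗ[ℝ] H) : conv (conv f g) h = conv f (conv g h) := by
  ext a
  obtain r := Coalgebra.Repr.arbitrary ℝ a
  set a₁ : ∀ i : H × H, Coalgebra.Repr ℝ (r.left i) (H × H) := fun i => Coalgebra.Repr.arbitrary ℝ (r.left i)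
  set a₂ : ∀ i : H × H, Coalgebra.Repr ℝ (r.right i) (H × H) := fun i => Coalgebra.Repr.arbitrary ℝ (r.right i)
  have key := Coalgebra.sum_tmul_tmul_eq (R := ℝ) r a₁ a₂
  -- apply the trilinear map x ⊗ y ⊗ z ↦ f x * (g y * h z)
  let φ : H ⊗[ℝ] (H ⊗[ℝ] H) →ₗ[ℝ] H :=
    (LinearMap.mul' ℝ H).comp
      ((TensorProduct.map f ((LinearMap.mul' ℝ H).comp (TensorProduct.map g h))))
  have key2 := congrArg φ key
  simp only [map_sum, φ, LinearMap.comp_apply, TensorProduct.map_tmul,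
    LinearMap.mul'_apply] at key2
  rw [conv_repr _ _ _ r, conv_repr _ _ _ r]
  calc ∑ i ∈ r.index, conv f g (r.left i) * h (r.right i)
      = ∑ i ∈ r.index, ∑ j ∈ (a₁ i).index,
          f ((a₁ i).left j) * (g ((a₁ i).right j) * h (r.right i)) := by
        refine Finset.sum_congr rfl fun i _ => ?_
        rw [conv_repr _ _ _ (a₁ i), Finset.sum_mul]
        exact Finset.sum_congr rfl fun j _ => (mul_assoc _ _ _)
    _ = ∑ i ∈ r.index, ∑ j ∈ (a₂ i).index,
          f (r.left i) * (g ((a₂ i).left j) * h ((a₂ i).right j)) := key2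
    _ = ∑ i ∈ r.index, f (r.left i) * conv g h (r.right i) := by
        refine Finset.sum_congr rfl fun i _ => ?_
        rw [conv_repr _ _ _ (a₂ i), Finset.mul_sum]

lemma conv_add_left (f₁ f₂ g : H →ₗ[ℝ] H) : conv (f₁ + f₂) g = conv f₁ g + conv f₂ g := by
  unfold conv
  rw [TensorProduct.map_add_left, LinearMap.add_comp, LinearMap.comp_add]

lemma conv_add_right (f g₁ g₂ : H →ₗ[ℝ] H) : conv f (g₁ + g₂) = conv f g₁ + conv f g₂ := by
  unfold conv
  rw [TensorProduct.map_add_right, LinearMap.add_comp, LinearMap.comp_add]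

lemma conv_smul_left (c : ℝ) (f g : H →ₗ[ℝ] H) : conv (c • f) g = c • conv f g := by
  unfold conv
  rw [TensorProduct.map_smul_left, LinearMap.smul_comp, LinearMap.comp_smul]

lemma conv_sum_left {ι : Type*} (s : Finset ι) (f : ι → (H →ₗ[ℝ] H)) (g : H →ₗ[ℝ] H) :
    conv (∑ i ∈ s, f i) g = ∑ i ∈ s, conv (f i) g := by
  classical
  induction s using Finset.induction_on with
  | empty =>
      simp only [Finset.sum_empty]
      ext a; simp [conv]
  | insert _ _ hni ih =>
      rw [Finset.sum_insert hni, Finset.sum_insert hni, conv_add_left, ih]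

lemma conv_sum_right {ι : Type*} (s : Finset ι) (g : ι → (H →ₗ[ℝ] H)) (f : H →ₗ[ℝ] H) :
    conv f (∑ i ∈ s, g i) = ∑ i ∈ s, conv f (g i) := by
  classical
  induction s using Finset.induction_on with
  | empty =>
      simp only [Finset.sum_empty]
      ext a; simp [conv]
  | insert _ _ hni ih =>
      rw [Finset.sum_insert hni, Finset.sum_insert hni, conv_add_right, ih]

/-- Convolution powers, `convPow f 0 = cunit`. -/
noncomputable def convPow (f : H →ₗ[ℝ] H) : ℕ → (H →ₗ[ℝ] H)
  | 0 => cunit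
  | (n + 1) => conv (convPow f n) f

lemma conv_convPow (f : H →ₗ[ℝ] H) (n : ℕ) : conv f (convPow f n) = convPow f (n + 1) := by
  induction n with
  | zero => show conv f cunit = conv cunit f; rw [conv_cunit_left, conv_cunit_right]
  | succ m ih =>
      rw [show convPow f (m + 1) = conv (convPow f m) f from rfl, ← conv_assoc, ih]
      rfl


/-- The comultiplication-compatibility condition for a filtration/grading. -/
def ComulCompat (F : ℕ → Submodule ℝ H) : Prop :=
  ∀ n : ℕ, ∀ x ∈ F n,
    Coalgebra.comul (R := ℝ) x ∈
      ⨆ (p : ℕ × ℕ) (_ : p.1 + p.2 = n),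
        LinearMap.range (TensorProduct.map (F p.1).subtype (F p.2).subtype)

lemma comul_mem_of {F : ℕ → Submodule ℝ H} (hF : ComulCompat F)
    {n : ℕ} {x : H} (hx : x ∈ F n) (Q : Submodule ℝ (H ⊗[ℝ] H))
    (hQ : ∀ a b : ℕ, a + b = n → ∀ y ∈ F a, ∀ z ∈ F b, y ⊗ₜ[ℝ] z ∈ Q) :
    Coalgebra.comul (R := ℝ) x ∈ Q := by
  have hle : (⨆ (p : ℕ × ℕ) (_ : p.1 + p.2 = n),
      LinearMap.range (TensorProduct.map (F p.1).subtype (F p.2).subtype)) ≤ Q := by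
    refine iSup_le fun p => iSup_le fun hp => ?_
    rintro t ⟨s, rfl⟩
    induction s using TensorProduct.induction_on with
    | zero => simp
    | tmul y z =>
        rw [TensorProduct.map_tmul]
        exact hQ p.1 p.2 hp y y.2 z z.2
    | add s₁ s₂ ih₁ ih₂ => rw [map_add]; exact Q.add_mem ih₁ ih₂
  exact hle (hF n x hx)

lemma convPow_eq_zero {F : ℕ → Submodule ℝ H} (hF : ComulCompat F)
    {f : H →ₗ[ℝ] H} (hf0 : ∀ x ∈ F 0, f x = 0) :
    ∀ k n : ℕ, n < k → ∀ x ∈ F n, convPow f k x = 0 := by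
  intro k
  induction k with
  | zero => omega
  | succ m ih =>
      intro n hn x hx
      have hker : Coalgebra.comul (R := ℝ) x ∈
          LinearMap.ker ((LinearMap.mul' ℝ H).comp (TensorProduct.map (convPow f m) f)) := by
        refine comul_mem_of hF hx _ fun a b hab y hy z hz => ?_
        rw [LinearMap.mem_ker, LinearMap.comp_apply, TensorProduct.map_tmul,
          LinearMap.mul'_apply]
        rcases Nat.eq_zero_or_pos b with hb | hb
        · subst hb; rw [hf0 z hz, mul_zero]
        · have ha : a < m := by omega
          rw [ih a ha y hy, zero_mul]
      rw [LinearMap.mem_ker] at hker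
      show ((LinearMap.mul' ℝ H).comp ((TensorProduct.map (convPow f m) f).comp
        (Coalgebra.comul (R := ℝ)))) x = 0
      simpa using hker

lemma conv_congr_left {F : ℕ → Submodule ℝ H} (hF : ComulCompat F)
    {n : ℕ} {x : H} (hx : x ∈ F n) {u u' : H →ₗ[ℝ] H} (v : H →ₗ[ℝ] H)
    (hu : ∀ a ≤ n, ∀ y ∈ F a, u y = u' y) :
    conv u v x = conv u' v x := by
  have hker : Coalgebra.comul (R := ℝ) x ∈
      LinearMap.ker ((LinearMap.mul' ℝ H).comp (TensorProduct.map u v)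
        - (LinearMap.mul' ℝ H).comp (TensorProduct.map u' v)) := by
    refine comul_mem_of hF hx _ fun a b hab y hy z hz => ?_
    rw [LinearMap.mem_ker, LinearMap.sub_apply, LinearMap.comp_apply, LinearMap.comp_apply,
      TensorProduct.map_tmul, TensorProduct.map_tmul, LinearMap.mul'_apply, LinearMap.mul'_apply,
      hu a (by omega) y hy, sub_self]
  rw [LinearMap.mem_ker, LinearMap.sub_apply, sub_eq_zero] at hker
  exact hker

lemma conv_congr_right {F : ℕ → Submodule ℝ H} (hF : ComulCompat F)
    {n : ℕ} {x : H} (hx : x ∈ F n) {u u' : H →ₗ[ℝ] H} (v : H →ₗ[ℝ] H)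
    (hu : ∀ b ≤ n, ∀ z ∈ F b, u z = u' z) :
    conv v u x = conv v u' x := by
  have hker : Coalgebra.comul (R := ℝ) x ∈
      LinearMap.ker ((LinearMap.mul' ℝ H).comp (TensorProduct.map v u)
        - (LinearMap.mul' ℝ H).comp (TensorProduct.map v u')) := by
    refine comul_mem_of hF hx _ fun a b hab y hy z hz => ?_
    rw [LinearMap.mem_ker, LinearMap.sub_apply, LinearMap.comp_apply, LinearMap.comp_apply,
      TensorProduct.map_tmul, TensorProduct.map_tmul, LinearMap.mul'_apply, LinearMap.mul'_apply,
      hu b (by omega) z hz, sub_self]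
  rw [LinearMap.mem_ker, LinearMap.sub_apply, sub_eq_zero] at hker
  exact hker

/-- Partial geometric series for the convolution inverse of `cunit + f`. -/
noncomputable def geom (f : H →ₗ[ℝ] H) (n : ℕ) : H →ₗ[ℝ] H :=
  ∑ m ∈ Finset.range (n + 1), ((-1 : ℝ) ^ m) • convPow f m

lemma conv_geom_right (f : H →ₗ[ℝ] H) (n : ℕ) :
    conv (geom f n) (cunit + f) = cunit + ((-1 : ℝ) ^ n) • convPow f (n + 1) := by
  induction n with
  | zero =>
      have h0 : geom f 0 = cunit (H := H) := by
        simp [geom, convPow]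
      simp only [h0, conv_add_right, conv_cunit_left, pow_zero, one_smul,
        show convPow f 1 = conv cunit f from rfl]
  | succ n ih =>
      have hstep : geom f (n + 1) = geom f n + ((-1 : ℝ) ^ (n + 1)) • convPow f (n + 1) := by
        rw [geom, Finset.sum_range_succ]; rfl
      rw [hstep, conv_add_left, ih, conv_smul_left, conv_add_right, conv_cunit_right]
      have h2 : conv (convPow f (n + 1)) f = convPow f (n + 2) := rfl
      rw [h2, smul_add]
      have hcancel : ((-1 : ℝ) ^ n) • convPow f (n + 1) + ((-1 : ℝ) ^ (n + 1)) • convPow f (n + 1)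
          = 0 := by
        rw [← add_smul, show (-1 : ℝ) ^ n + (-1 : ℝ) ^ (n + 1) = 0 by ring, zero_smul]
      rw [add_assoc, ← add_assoc (((-1 : ℝ) ^ n) • convPow f (n + 1)), hcancel, zero_add]

lemma conv_geom_left (f : H →ₗ[ℝ] H) (n : ℕ) :
    conv (cunit + f) (geom f n) = cunit + ((-1 : ℝ) ^ n) • convPow f (n + 1) := by
  rw [conv_add_left, conv_cunit_left, geom, conv_sum_right]
  have hterm : ∀ m, conv f (((-1 : ℝ) ^ m) • convPow f m) = ((-1 : ℝ) ^ m) • convPow f (m + 1) := by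
    intro m
    have : conv f (((-1 : ℝ) ^ m) • convPow f m) = ((-1 : ℝ) ^ m) • conv f (convPow f m) := by
      unfold conv
      rw [TensorProduct.map_smul_right, LinearMap.smul_comp, LinearMap.comp_smul]
    rw [this, conv_convPow]
  calc (∑ m ∈ Finset.range (n + 1), ((-1 : ℝ) ^ m) • convPow f m)
        + ∑ m ∈ Finset.range (n + 1), conv f (((-1 : ℝ) ^ m) • convPow f m)
      = (∑ m ∈ Finset.range (n + 1), ((-1 : ℝ) ^ m) • convPow f m)
        + ∑ m ∈ Finset.range (n + 1), ((-1 : ℝ) ^ m) • convPow f (m + 1) := by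
        rw [Finset.sum_congr rfl fun m _ => hterm m]
    _ = cunit + ((-1 : ℝ) ^ n) • convPow f (n + 1) := by
        induction n with
        | zero => simp [convPow]
        | succ n ih =>
            rw [Finset.sum_range_succ, Finset.sum_range_succ
              (f := fun m => ((-1 : ℝ) ^ m) • convPow f (m + 1))]
            have key : ((-1 : ℝ) ^ n) • convPow f (n + 1)
                + ((-1 : ℝ) ^ (n + 1)) • convPow f (n + 1) = 0 := by
              rw [← add_smul, show (-1 : ℝ) ^ n + (-1 : ℝ) ^ (n + 1) = 0 by ring, zero_smul]
            calc (∑ m ∈ Finset.range (n + 1), ((-1 : ℝ)) ^ m • convPow f m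
                    + ((-1 : ℝ)) ^ (n + 1) • convPow f (n + 1))
                  + (∑ m ∈ Finset.range (n + 1), ((-1 : ℝ)) ^ m • convPow f (m + 1)
                    + ((-1 : ℝ)) ^ (n + 1) • convPow f (n + 1 + 1))
                = ((∑ m ∈ Finset.range (n + 1), ((-1 : ℝ)) ^ m • convPow f m)
                    + ∑ m ∈ Finset.range (n + 1), ((-1 : ℝ)) ^ m • convPow f (m + 1))
                  + (((-1 : ℝ)) ^ (n + 1) • convPow f (n + 1)
                    + ((-1 : ℝ)) ^ (n + 1) • convPow f (n + 1 + 1)) := by abel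
              _ = (cunit + ((-1 : ℝ) ^ n) • convPow f (n + 1))
                  + (((-1 : ℝ)) ^ (n + 1) • convPow f (n + 1)
                    + ((-1 : ℝ)) ^ (n + 1) • convPow f (n + 1 + 1)) := by rw [ih]
              _ = cunit + ((-1 : ℝ)) ^ (n + 1) • convPow f (n + 1 + 1) := by
                  rw [add_assoc, ← add_assoc (((-1 : ℝ) ^ n) • convPow f (n + 1)), key, zero_add]


variable {d : ℕ} (g : Fin d → H)

/-- The monomial `∏ i, g i ^ k i`. -/
def mono (k : Fin d → ℕ) : H := ((List.finRange d).map fun i => g i ^ k i).prod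

variable {g}

lemma listProd_update (hcomm : ∀ i j, Commute (g i) (g j)) (k : Fin d → ℕ) (i : Fin d) :
    ∀ L : List (Fin d), L.Nodup → i ∈ L →
      ((L.map fun j => g j ^ (Function.update k i (k i + 1)) j).prod
        = (L.map fun j => g j ^ k j).prod * g i) := by
  intro L
  induction L with
  | nil => intro _ h; simp at h
  | cons a L ih =>
      intro hnd hi
      have hnd' : L.Nodup := (List.nodup_cons.mp hnd).2
      rcases eq_or_ne a i with rfl | hne
      · have hiL : a ∉ L := (List.nodup_cons.mp hnd).1
        have hmap : (L.map fun j => g j ^ (Function.update k a (k a + 1)) j)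
            = L.map fun j => g j ^ k j := by
          refine List.map_congr_left fun j hj => ?_
          have : j ≠ a := fun h => hiL (h ▸ hj)
          rw [Function.update_of_ne this]
        have hcommL : Commute (g a) ((L.map fun j => g j ^ k j).prod) := by
          refine Commute.list_prod_right _ _ fun y hy => ?_
          obtain ⟨j, _, rfl⟩ := List.mem_map.mp hy
          exact (hcomm a j).pow_right _
        simp only [List.map_cons, List.prod_cons, hmap, Function.update_self]
        rw [pow_succ, mul_assoc, hcommL.eq, ← mul_assoc]
      · have hiL : i ∈ L := by
          rcases List.mem_cons.mp hi with h | h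
          · exact absurd h.symm hne
          · exact h
        simp only [List.map_cons, List.prod_cons]
        rw [Function.update_of_ne hne, ih hnd' hiL, mul_assoc]

lemma mono_update (hcomm : ∀ i j, Commute (g i) (g j)) (k : Fin d → ℕ) (i : Fin d) :
    mono g (Function.update k i (k i + 1)) = mono g k * g i :=
  listProd_update hcomm k i _ (List.nodup_finRange d) (List.mem_finRange i)

lemma sum_update_succ (k : Fin d → ℕ) (i : Fin d) :
    (∑ j, Function.update k i (k i + 1) j) = (∑ j, k j) + 1 := by
  rw [Finset.sum_update_of_mem (Finset.mem_univ i)]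
  rw [← Finset.add_sum_erase _ k (Finset.mem_univ i), Finset.sdiff_singleton_eq_erase]
  omega

lemma mono_of_sum_eq_zero {k : Fin d → ℕ} (hk : (∑ j, k j) = 0) : mono g k = 1 := by
  have hk' : ∀ j, k j = 0 := by
    intro j
    exact (Finset.sum_eq_zero_iff.mp hk) j (Finset.mem_univ j)
  unfold mono
  refine List.prod_eq_one fun x hx => ?_
  obtain ⟨j, _, rfl⟩ := List.mem_map.mp hx
  rw [hk' j, pow_zero]

/-- Filtration by total degree of monomials. -/
def filt (g : Fin d → H) (n : ℕ) : Submodule ℝ H :=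
  Submodule.span ℝ {x | ∃ k : Fin d → ℕ, (∑ i, k i) ≤ n ∧ x = mono g k}

lemma mono_mem_filt {k : Fin d → ℕ} {n : ℕ} (h : (∑ i, k i) ≤ n) : mono g k ∈ filt g n :=
  Submodule.subset_span ⟨k, h, rfl⟩

lemma filt_mono {m n : ℕ} (h : m ≤ n) : filt g m ≤ filt g n :=
  Submodule.span_mono fun _ ⟨k, hk, hx⟩ => ⟨k, hk.trans h, hx⟩

lemma filt_le_span : ∀ n, filt g n ≤ Submodule.span ℝ (Set.range (mono g)) :=
  fun _ => Submodule.span_mono fun _ ⟨k, _, hx⟩ => ⟨k, hx.symm⟩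

lemma one_mem_filt : (1 : H) ∈ filt g 0 := by
  have : (1 : H) = mono g (fun _ => 0) := (mono_of_sum_eq_zero (by simp)).symm
  rw [this]
  exact mono_mem_filt (by simp)

lemma range_map_mono {A A' B B' : Submodule ℝ H} (hA : A ≤ A') (hB : B ≤ B') :
    LinearMap.range (TensorProduct.map A.subtype B.subtype)
      ≤ LinearMap.range (TensorProduct.map A'.subtype B'.subtype) := by
  rintro t ⟨s, rfl⟩
  induction s using TensorProduct.induction_on with
  | zero => simp
  | tmul y z =>
      exact ⟨(⟨y, hA y.2⟩ : A') ⊗ₜ[ℝ] (⟨z, hB z.2⟩ : B'), by simp⟩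
  | add s₁ s₂ ih₁ ih₂ =>
      rw [map_add]; exact Submodule.add_mem _ ih₁ ih₂

/-- The degree-`n` part of the induced "grading" of `H ⊗ H` from a filtration. -/
noncomputable def tsup (F : ℕ → Submodule ℝ H) (n : ℕ) : Submodule ℝ (H ⊗[ℝ] H) :=
  ⨆ (p : ℕ × ℕ) (_ : p.1 + p.2 = n),
    LinearMap.range (TensorProduct.map (F p.1).subtype (F p.2).subtype)

lemma tsup_filt_mono {m n : ℕ} (h : m ≤ n) : tsup (filt g) m ≤ tsup (filt g) n := by
  refine iSup_le fun p => iSup_le fun hp => ?_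
  have h1 : LinearMap.range (TensorProduct.map ((filt g) p.1).subtype ((filt g) p.2).subtype)
      ≤ LinearMap.range (TensorProduct.map ((filt g) (p.1 + (n - m))).subtype
        ((filt g) p.2).subtype) :=
    range_map_mono (filt_mono (Nat.le_add_right _ _)) le_rfl
  refine h1.trans ?_
  have : (p.1 + (n - m)) + p.2 = n := by omega
  exact le_iSup_of_le (p.1 + (n - m), p.2) (le_iSup_of_le this le_rfl)

lemma filt_mul_g (hcomm : ∀ i j, Commute (g i) (g j)) {a : ℕ} {y : H} (hy : y ∈ filt g a)
    (i : Fin d) : y * g i ∈ filt g (a + 1) := by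
  have : filt g a ≤ Submodule.comap (LinearMap.mulRight ℝ (g i)) (filt g (a + 1)) := by
    rw [filt, Submodule.span_le]
    rintro x ⟨k, hk, rfl⟩
    simp only [SetLike.mem_coe, Submodule.mem_comap, LinearMap.mulRight_apply]
    rw [← mono_update hcomm k i]
    exact mono_mem_filt (by rw [sum_update_succ]; omega)
  exact this hy

lemma tsup_mul_primitive (hcomm : ∀ i j, Commute (g i) (g j)) {n : ℕ} {t : H ⊗[ℝ] H}
    (ht : t ∈ tsup (filt g) n) (i : Fin d) :
    t * (g i ⊗ₜ[ℝ] 1 + 1 ⊗ₜ[ℝ] g i) ∈ tsup (filt g) (n + 1) := by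
  have hle : tsup (filt g) n ≤ Submodule.comap
      (LinearMap.mulRight ℝ (g i ⊗ₜ[ℝ] (1 : H) + (1 : H) ⊗ₜ[ℝ] g i)) (tsup (filt g) (n + 1)) := by
    refine iSup_le fun p => iSup_le fun hp => ?_
    rintro t ⟨s, rfl⟩
    induction s using TensorProduct.induction_on with
    | zero => simp
    | tmul y z =>
        simp only [Submodule.mem_comap, LinearMap.mulRight_apply, TensorProduct.map_tmul,
          Submodule.coe_subtype]
        rw [mul_add, Algebra.TensorProduct.tmul_mul_tmul, Algebra.TensorProduct.tmul_mul_tmul,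
          mul_one, mul_one]
        refine Submodule.add_mem _ ?_ ?_
        · have hmem : ((y : H) * g i) ⊗ₜ[ℝ] (z : H) ∈ LinearMap.range
              (TensorProduct.map ((filt g) (p.1 + 1)).subtype ((filt g) p.2).subtype) :=
            ⟨(⟨(y : H) * g i, filt_mul_g hcomm y.2 i⟩ : filt g (p.1 + 1)) ⊗ₜ[ℝ] z, by simp⟩
          exact Submodule.mem_iSup_of_mem (p.1 + 1, p.2) (Submodule.mem_iSup_of_mem (by omega) hmem)
        · have hmem : (y : H) ⊗ₜ[ℝ] ((z : H) * g i) ∈ LinearMap.range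
              (TensorProduct.map ((filt g) p.1).subtype ((filt g) (p.2 + 1)).subtype) :=
            ⟨y ⊗ₜ[ℝ] (⟨(z : H) * g i, filt_mul_g hcomm z.2 i⟩ : filt g (p.2 + 1)), by simp⟩
          exact Submodule.mem_iSup_of_mem (p.1, p.2 + 1) (Submodule.mem_iSup_of_mem (by omega) hmem)
    | add s₁ s₂ ih₁ ih₂ =>
        simp only [Submodule.mem_comap, LinearMap.mulRight_apply] at ih₁ ih₂ ⊢
        rw [map_add, add_mul]
        exact Submodule.add_mem _ ih₁ ih₂
  exact hle ht

lemma comul_mono_mem (hcomm : ∀ i j, Commute (g i) (g j))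
    (hprim : ∀ i, Coalgebra.comul (R := ℝ) (g i) = g i ⊗ₜ[ℝ] 1 + 1 ⊗ₜ[ℝ] g i) :
    ∀ N : ℕ, ∀ k : Fin d → ℕ, (∑ i, k i) = N →
      Coalgebra.comul (R := ℝ) (mono g k) ∈ tsup (filt g) N := by
  intro N
  induction N with
  | zero =>
      intro k hk
      rw [mono_of_sum_eq_zero hk]
      have h1 : Coalgebra.comul (R := ℝ) (1 : H) = (1 : H) ⊗ₜ[ℝ] (1 : H) := by
        rw [Bialgebra.comul_one, Algebra.TensorProduct.one_def]
      rw [h1]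
      have hmem : (1 : H) ⊗ₜ[ℝ] (1 : H) ∈ LinearMap.range
          (TensorProduct.map ((filt g) 0).subtype ((filt g) 0).subtype) :=
        ⟨(⟨1, one_mem_filt⟩ : filt g 0) ⊗ₜ[ℝ] (⟨1, one_mem_filt⟩ : filt g 0), by simp⟩
      exact Submodule.mem_iSup_of_mem ((0 : ℕ), (0 : ℕ)) (Submodule.mem_iSup_of_mem rfl hmem)
  | succ N ih =>
      intro k hk
      have hex : ∃ i, k i ≠ 0 := by
        by_contra h
        push_neg at h
        simp only [h, Finset.sum_const_zero] at hk
        omega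
      obtain ⟨i, hi⟩ := hex
      set k' : Fin d → ℕ := Function.update k i (k i - 1) with hk'
      have hkk : k = Function.update k' i (k' i + 1) := by
        funext j
        rcases eq_or_ne j i with rfl | hne
        · simp [hk', Function.update_self]; omega
        · simp [hk', Function.update_of_ne hne]
      have hsum' : (∑ j, k' j) = N := by
        have := sum_update_succ k' i
        rw [← hkk] at this
        omega
      rw [hkk, mono_update hcomm k' i, Bialgebra.comul_mul, hprim i]
      exact tsup_mul_primitive hcomm (ih k' hsum') i

lemma comulCompat_filt (hcomm : ∀ i j, Commute (g i) (g j))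
    (hprim : ∀ i, Coalgebra.comul (R := ℝ) (g i) = g i ⊗ₜ[ℝ] 1 + 1 ⊗ₜ[ℝ] g i) :
    ComulCompat (filt g) := by
  intro n x hx
  have hle : filt g n ≤ Submodule.comap (Coalgebra.comul (R := ℝ)) (tsup (filt g) n) := by
    rw [filt, Submodule.span_le]
    rintro x ⟨k, hk, rfl⟩
    simp only [SetLike.mem_coe, Submodule.mem_comap]
    exact tsup_filt_mono hk (comul_mono_mem hcomm hprim _ k rfl)
  exact hle hx



end GradedAntipodeAux

open GradedAntipodeAux in
/-- Existence of the antipode for suitable graded bialgebras.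
Let `H = ⨁ₙ Hₙ` be an `ℕ`-graded bialgebra over `ℝ` whose degree-zero component `H₀` is,
as an `ℝ`-algebra, a free commutative polynomial algebra on finitely many generators
`g₁, …, g_d`, each of which is primitive.  Then `H` admits an antipode `S`, i.e. a
linear map with `m ∘ (S ⊗ id) ∘ Δ = η ∘ ε = m ∘ (id ⊗ S) ∘ Δ`, so `H` is a Hopf
algebra. -/
theorem graded_bialgebra_antipode
    (H : Type*) [Ring H] [Bialgebra ℝ H]
    (𝒜 : ℕ → Submodule ℝ H) (hdecomp : DirectSum.IsInternal 𝒜)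
    (hone : (1 : H) ∈ 𝒜 0)
    (hmul : ∀ i j : ℕ, ∀ x ∈ 𝒜 i, ∀ y ∈ 𝒜 j, x * y ∈ 𝒜 (i + j))
    (hcomul_graded : ∀ n : ℕ, ∀ x ∈ 𝒜 n,
      Coalgebra.comul (R := ℝ) x ∈
        ⨆ (p : ℕ × ℕ) (_ : p.1 + p.2 = n),
          LinearMap.range (TensorProduct.map (𝒜 p.1).subtype (𝒜 p.2).subtype))
    (dgen : ℕ) (g : Fin dgen → H)
    (hcomm : ∀ i j, Commute (g i) (g j))
    (hprim : ∀ i, Coalgebra.comul (R := ℝ) (g i) = g i ⊗ₜ[ℝ] 1 + 1 ⊗ₜ[ℝ] g i)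
    (hLI : LinearIndependent ℝ fun k : Fin dgen → ℕ => ((List.finRange dgen).map fun i => g i ^ k i).prod)
    (hspan : 𝒜 0 = Submodule.span ℝ (Set.range fun k : Fin dgen → ℕ => ((List.finRange dgen).map fun i => g i ^ k i).prod)) :
    ∃ S : H →ₗ[ℝ] H,
      (LinearMap.mul' ℝ H).comp ((LinearMap.rTensor H S).comp (Coalgebra.comul (R := ℝ))) =
        (Algebra.linearMap ℝ H).comp (Coalgebra.counit (R := ℝ)) ∧
      (LinearMap.mul' ℝ H).comp ((LinearMap.lTensor H S).comp (Coalgebra.comul (R := ℝ))) =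
        (Algebra.linearMap ℝ H).comp (Coalgebra.counit (R := ℝ)) := by
  classical
  -- the filtration of the degree-zero part by total degree of monomials
  have hFcompat : ComulCompat (filt g) := comulCompat_filt hcomm hprim
  have hAcompat : ComulCompat 𝒜 := hcomul_graded
  -- the "augmentation complement" part of the identity on the degree-zero component
  set f0 : H →ₗ[ℝ] H := LinearMap.id - cunit with hf0def
  have hid : cunit + f0 = (LinearMap.id : H →ₗ[ℝ] H) := by rw [hf0def]; abel
  have hf0 : ∀ x ∈ filt g 0, f0 x = 0 := by
    have hle : filt g 0 ≤ LinearMap.ker f0 := by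
      rw [filt, Submodule.span_le]
      rintro x ⟨k, hk, rfl⟩
      have hk0 : (∑ i, k i) = 0 := Nat.le_zero.mp hk
      simp only [SetLike.mem_coe, LinearMap.mem_ker]
      rw [mono_of_sum_eq_zero hk0, hf0def, LinearMap.sub_apply, LinearMap.id_apply,
        cunit_apply, Bialgebra.counit_one, one_smul, sub_self]
    exact fun x hx => hle hx
  have hvan0 := convPow_eq_zero hFcompat hf0
  -- membership of monomials
  have hmonoA : ∀ k : Fin dgen → ℕ, mono g k ∈ 𝒜 0 := by
    intro k
    rw [hspan]
    exact Submodule.subset_span ⟨k, rfl⟩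
  -- the local antipode of the degree-zero component, defined on the monomial basis
  set u0 : ↥(𝒜 0) →ₗ[ℝ] H :=
    ((Module.Basis.span hLI).constr ℝ (fun k => geom f0 (∑ i, k i) (mono g k))) ∘ₗ
      (LinearEquiv.ofEq _ _ hspan).toLinearMap with hu0def
  set π₀ : H →ₗ[ℝ] ↥(𝒜 0) :=
    (DirectSum.component ℝ ℕ (fun n => ↥(𝒜 n)) 0) ∘ₗ
      (LinearEquiv.ofBijective (DirectSum.coeLinearMap 𝒜) hdecomp).symm.toLinearMap with hπ₀def
  have hsymm : ∀ (n : ℕ) (x : H) (hx : x ∈ 𝒜 n),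
      (LinearEquiv.ofBijective (DirectSum.coeLinearMap 𝒜) hdecomp).symm x
        = DirectSum.lof ℝ ℕ (fun n => ↥(𝒜 n)) n ⟨x, hx⟩ := by
    intro n x hx
    rw [LinearEquiv.symm_apply_eq]
    change x = DirectSum.coeLinearMap 𝒜 (DirectSum.lof ℝ ℕ (fun n => ↥(𝒜 n)) n ⟨x, hx⟩)
    rw [DirectSum.lof_eq_of,
      DirectSum.coeLinearMap_of]
  have hπ₀ : ∀ (x : H) (hx : x ∈ 𝒜 0), π₀ x = ⟨x, hx⟩ := by
    intro x hx
    rw [hπ₀def, LinearMap.comp_apply, LinearEquiv.coe_coe, hsymm 0 x hx,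
      DirectSum.component.lof_self]
  set ub : H →ₗ[ℝ] H := u0 ∘ₗ π₀ with hubdef
  have hub_mono : ∀ k : Fin dgen → ℕ, ub (mono g k) = geom f0 (∑ i, k i) (mono g k) := by
    intro k
    rw [hubdef, LinearMap.comp_apply, hπ₀ (mono g k) (hmonoA k), hu0def, LinearMap.comp_apply]
    have heq : ((LinearEquiv.ofEq _ _ hspan).toLinearMap
        (⟨mono g k, hmonoA k⟩ : ↥(𝒜 0))) = Module.Basis.span hLI k := by
      apply Subtype.ext
      rw [Module.Basis.span_apply]
      rfl
    rw [heq, Module.Basis.constr_basis]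
  -- `ub` agrees with the partial geometric series on each filtration step
  have hagree : ∀ n a : ℕ, a ≤ n → ∀ y ∈ filt g a, ub y = geom f0 n y := by
    intro n a han
    have hle : filt g a ≤ LinearMap.ker (ub - geom f0 n) := by
      rw [filt, Submodule.span_le]
      rintro x ⟨k, hk, rfl⟩
      simp only [SetLike.mem_coe, LinearMap.mem_ker, LinearMap.sub_apply, sub_eq_zero]
      rw [hub_mono k]
      have hsub : Finset.range ((∑ i, k i) + 1) ⊆ Finset.range (n + 1) :=
        Finset.range_subset_range.mpr (by omega)
      rw [geom, geom]
      simp only [LinearMap.coe_sum, Finset.sum_apply, LinearMap.smul_apply]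
      refine Finset.sum_subset hsub fun m _ hm => ?_
      have hlt : (∑ i, k i) < m := by
        simp only [Finset.mem_range, not_lt] at hm
        omega
      rw [hvan0 m (∑ i, k i) hlt (mono g k) (mono_mem_filt le_rfl), smul_zero]
    intro y hy
    have := hle hy
    rw [LinearMap.mem_ker, LinearMap.sub_apply, sub_eq_zero] at this
    exact this
  -- `ub` is a one-sided convolution inverse of the identity on the degree-zero component
  have hL0 : ∀ x ∈ 𝒜 0, conv ub LinearMap.id x = cunit x := by
    have hle : 𝒜 0 ≤ LinearMap.ker (conv ub LinearMap.id - cunit) := by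
      rw [hspan, Submodule.span_le]
      rintro x ⟨k, rfl⟩
      have hxF : mono g k ∈ filt g (∑ i, k i) := mono_mem_filt le_rfl
      simp only [SetLike.mem_coe, LinearMap.mem_ker, LinearMap.sub_apply, sub_eq_zero]
      show conv ub LinearMap.id (mono g k) = cunit (mono g k)
      have h1 : conv ub LinearMap.id (mono g k)
          = conv (geom f0 (∑ i, k i)) LinearMap.id (mono g k) :=
        conv_congr_left hFcompat hxF _ (fun a ha y hy => hagree _ a ha y hy)
      rw [h1, ← hid, conv_geom_right, LinearMap.add_apply, LinearMap.smul_apply,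
        hvan0 _ _ (Nat.lt_succ_self _) (mono g k) hxF, smul_zero, add_zero]
    intro x hx
    have := hle hx
    rw [LinearMap.mem_ker, LinearMap.sub_apply, sub_eq_zero] at this
    exact this
  have hR0 : ∀ x ∈ 𝒜 0, conv LinearMap.id ub x = cunit x := by
    have hle : 𝒜 0 ≤ LinearMap.ker (conv LinearMap.id ub - cunit) := by
      rw [hspan, Submodule.span_le]
      rintro x ⟨k, rfl⟩
      have hxF : mono g k ∈ filt g (∑ i, k i) := mono_mem_filt le_rfl
      simp only [SetLike.mem_coe, LinearMap.mem_ker, LinearMap.sub_apply, sub_eq_zero]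
      show conv LinearMap.id ub (mono g k) = cunit (mono g k)
      have h1 : conv LinearMap.id ub (mono g k)
          = conv LinearMap.id (geom f0 (∑ i, k i)) (mono g k) :=
        conv_congr_right hFcompat hxF _ (fun a ha y hy => hagree _ a ha y hy)
      rw [h1, ← hid, conv_geom_left, LinearMap.add_apply, LinearMap.smul_apply,
        hvan0 _ _ (Nat.lt_succ_self _) (mono g k) hxF, smul_zero, add_zero]
    intro x hx
    have := hle hx
    rw [LinearMap.mem_ker, LinearMap.sub_apply, sub_eq_zero] at this
    exact this
  -- now pass to the whole graded algebra
  set fL : H →ₗ[ℝ] H := conv ub LinearMap.id - cunit with hfLdef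
  set fR : H →ₗ[ℝ] H := conv LinearMap.id ub - cunit with hfRdef
  have hvL : cunit + fL = conv ub LinearMap.id := by rw [hfLdef]; abel
  have hvR : cunit + fR = conv LinearMap.id ub := by rw [hfRdef]; abel
  have hfL0 : ∀ x ∈ 𝒜 0, fL x = 0 := by
    intro x hx
    rw [hfLdef, LinearMap.sub_apply, hL0 x hx, sub_self]
  have hfR0 : ∀ x ∈ 𝒜 0, fR x = 0 := by
    intro x hx
    rw [hfRdef, LinearMap.sub_apply, hR0 x hx, sub_self]
  have hvanL := convPow_eq_zero hAcompat hfL0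
  have hvanR := convPow_eq_zero hAcompat hfR0
  -- glue the partial geometric series into global linear maps
  set w : H →ₗ[ℝ] H :=
    (DirectSum.toModule ℝ ℕ H (fun n => (geom fL n) ∘ₗ (𝒜 n).subtype)) ∘ₗ
      (LinearEquiv.ofBijective (DirectSum.coeLinearMap 𝒜) hdecomp).symm.toLinearMap with hwdef
  set w' : H →ₗ[ℝ] H :=
    (DirectSum.toModule ℝ ℕ H (fun n => (geom fR n) ∘ₗ (𝒜 n).subtype)) ∘ₗ
      (LinearEquiv.ofBijective (DirectSum.coeLinearMap 𝒜) hdecomp).symm.toLinearMap with hw'def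
  have hw : ∀ (n : ℕ) (x : H), x ∈ 𝒜 n → w x = geom fL n x := by
    intro n x hx
    rw [hwdef, LinearMap.comp_apply, LinearEquiv.coe_coe, hsymm n x hx, DirectSum.toModule_lof]
    rfl
  have hw' : ∀ (n : ℕ) (x : H), x ∈ 𝒜 n → w' x = geom fR n x := by
    intro n x hx
    rw [hw'def, LinearMap.comp_apply, LinearEquiv.coe_coe, hsymm n x hx, DirectSum.toModule_lof]
    rfl
  have hgeom_agree : ∀ (f : H →ₗ[ℝ] H), (∀ x ∈ 𝒜 0, f x = 0) →
      ∀ n a : ℕ, a ≤ n → ∀ y ∈ 𝒜 a, geom f a y = geom f n y := by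
    intro f hf n a han y hy
    have hsub : Finset.range (a + 1) ⊆ Finset.range (n + 1) :=
      Finset.range_subset_range.mpr (by omega)
    rw [geom, geom]
    simp only [LinearMap.coe_sum, Finset.sum_apply, LinearMap.smul_apply]
    refine Finset.sum_subset hsub fun m _ hm => ?_
    have hlt : a < m := by
      simp only [Finset.mem_range, not_lt] at hm
      omega
    rw [convPow_eq_zero hAcompat hf m a hlt y hy, smul_zero]
  have hwagree : ∀ n a : ℕ, a ≤ n → ∀ y ∈ 𝒜 a, w y = geom fL n y := by
    intro n a han y hy
    rw [hw a y hy]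
    exact hgeom_agree fL hfL0 n a han y hy
  have hw'agree : ∀ n a : ℕ, a ≤ n → ∀ y ∈ 𝒜 a, w' y = geom fR n y := by
    intro n a han y hy
    rw [hw' a y hy]
    exact hgeom_agree fR hfR0 n a han y hy
  -- `w` is a left convolution inverse of `conv ub id`, `w'` a right inverse of `conv id ub`
  have hwv : conv w (conv ub LinearMap.id) = cunit (H := H) := by
    apply LinearMap.ext
    intro x
    have hx : x ∈ ⨆ n, 𝒜 n := by
      rw [hdecomp.submodule_iSup_eq_top]; trivial
    refine Submodule.iSup_induction 𝒜 (motive := fun x => conv w (conv ub LinearMap.id) x = cunit x)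
      hx (fun n x hxn => ?_) (by simp) (fun a b ha hb => by
        rw [map_add, map_add, ha, hb])
    show conv w (conv ub LinearMap.id) x = cunit x
    have h1 : conv w (conv ub LinearMap.id) x = conv (geom fL n) (conv ub LinearMap.id) x :=
      conv_congr_left hAcompat hxn _ (fun a ha y hy => hwagree n a ha y hy)
    rw [h1, ← hvL, conv_geom_right, LinearMap.add_apply, LinearMap.smul_apply,
      hvanL _ _ (Nat.lt_succ_self _) x hxn, smul_zero, add_zero]
  have hv'w' : conv (conv LinearMap.id ub) w' = cunit (H := H) := by
    apply LinearMap.ext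
    intro x
    have hx : x ∈ ⨆ n, 𝒜 n := by
      rw [hdecomp.submodule_iSup_eq_top]; trivial
    refine Submodule.iSup_induction 𝒜 (motive := fun x => conv (conv LinearMap.id ub) w' x = cunit x)
      hx (fun n x hxn => ?_) (by simp) (fun a b ha hb => by
        rw [map_add, map_add, ha, hb])
    show conv (conv LinearMap.id ub) w' x = cunit x
    have h1 : conv (conv LinearMap.id ub) w' x = conv (conv LinearMap.id ub) (geom fR n) x :=
      conv_congr_right hAcompat hxn _ (fun a ha y hy => hw'agree n a ha y hy)
    rw [h1, ← hvR, conv_geom_left, LinearMap.add_apply, LinearMap.smul_apply,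
      hvanR _ _ (Nat.lt_succ_self _) x hxn, smul_zero, add_zero]
  -- assemble the antipode
  set SL : H →ₗ[ℝ] H := conv w ub with hSLdef
  set SR : H →ₗ[ℝ] H := conv ub w' with hSRdef
  have hSL : conv SL LinearMap.id = cunit (H := H) := by
    rw [hSLdef, conv_assoc]; exact hwv
  have hSR : conv LinearMap.id SR = cunit (H := H) := by
    rw [hSRdef, ← conv_assoc]; exact hv'w'
  have hLR : SL = SR := by
    have h1 : SL = conv SL (conv LinearMap.id SR) := by rw [hSR, conv_cunit_right]
    rw [h1, ← conv_assoc, hSL, conv_cunit_left]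
  refine ⟨SL, ?_, ?_⟩
  · exact hSL
  · rw [show (LinearMap.lTensor H SL) = TensorProduct.map LinearMap.id SL from rfl]
    rw [hLR]
    exact hSR
end

section
/- Let d ≥ 1, let s ∈ (0,∞)^d be a scaling, let r > 0, and let A ⊆ {k ∈ ℕ^d : |k|_s < r} be a nonempty downward-closed set of multi-indices (k ∈ A and l ≤ k componentwise imply l ∈ A; in particular 0 ∈ A). Suppose f : ℝ^d → ℝ has continuous partial derivatives ∂^k for every multi-index k with |k|_s ≤ r. Then for every x ∈ ℝ^d: f(x) = Σ_{k∈A} (1/k!) ∂^k f(0) x^k + Σ_{k∈∂A} (x^{k↓}/k↓!) ∫_{ℝ^d} δ_k[∂^{k↓} f]((x_1 y_1, …, x_d y_d)) Q^{k↓}(dy), where ∂A = {k ∈ ℕ^d ∖ A : k↓ ∈ A}. -/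
open MeasureTheory
open scoped BigOperators
open scoped NNReal ENNReal

namespace AnisoTaylor

variable {d : ℕ}

/-- First-order partial derivative in direction `i`. -/
noncomputable def pd (i : Fin d) (f : (Fin d → ℝ) → ℝ) : (Fin d → ℝ) → ℝ :=
  fun x => fderiv ℝ f x (Pi.single i 1)

/-- Iterated partial derivative `∂^k`. -/
noncomputable def mderiv (k : Fin d → ℕ) (f : (Fin d → ℝ) → ℝ) : (Fin d → ℝ) → ℝ :=
  (List.finRange d).foldr (fun i g => (pd i)^[k i] g) f

/-- Scaled degree `|k|_s = Σ sᵢ kᵢ`. -/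
noncomputable def sdeg (s : Fin d → ℝ) (k : Fin d → ℕ) : ℝ := ∑ i, s i * k i

/-- The position (as a natural number) of the least nonzero entry of `k`
(junk value `0` for `k = 0`). -/
noncomputable def mPos (k : Fin d → ℕ) : ℕ :=
  sInf {m : ℕ | ∃ j : Fin d, (j : ℕ) = m ∧ k j ≠ 0}

/-- `k↓ = k − e_{𝔪(k)}`. -/
noncomputable def kdown (k : Fin d → ℕ) : Fin d → ℕ :=
  fun i => if (i : ℕ) = mPos k then k i - 1 else k i

/-- Truncation keeping the first `m` coordinates: `(y₁, …, y_m, 0, …, 0)`. -/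
def trunc (m : ℕ) (y : Fin d → ℝ) : Fin d → ℝ := fun i => if (i : ℕ) < m then y i else 0

/-- `δ_k[g](y) = g(y₁,…,y_{𝔪(k)},0,…,0) − g(y₁,…,y_{𝔪(k)−1},0,…,0)`. -/
noncomputable def deltaK (k : Fin d → ℕ) (g : (Fin d → ℝ) → ℝ) (y : Fin d → ℝ) : ℝ :=
  g (trunc (mPos k + 1) y) - g (trunc (mPos k) y)

/-- The measure `Q^k` on `ℝ^d`:
`(∏_{i<𝔪(k)} δ₁) ⊗ (l·1_{[0,1]}(y)(1−y)^{l−1} dy) ⊗ (∏_{i>𝔪(k)} δ₀)` with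
`l = k_{𝔪(k)}`, and `Q^0 = ∏ δ₁`. -/
noncomputable def Qmeas (k : Fin d → ℕ) : Measure (Fin d → ℝ) :=
  Measure.pi fun i =>
    if ∀ j, k j = 0 then Measure.dirac 1
    else if (i : ℕ) < mPos k then Measure.dirac 1
    else if (i : ℕ) = mPos k then
      (volume.restrict (Set.Icc (0 : ℝ) 1)).withDensity fun y =>
        ENNReal.ofReal ((k i : ℝ) * (1 - y) ^ (k i - 1))
    else Measure.dirac 0

/-- The boundary `∂A = {k ∉ A : k↓ ∈ A}` of a downward-closed finite set of
multi-indices, as a finite set. -/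
noncomputable def bdry (A : Finset (Fin d → ℕ)) : Finset (Fin d → ℕ) :=
  (A.biUnion fun l =>
      (Finset.univ : Finset (Fin d)).image fun i j => l j + if j = i then 1 else 0).filter
    fun k => k ∉ A ∧ kdown k ∈ A

-- ### mPos lemmas

lemma mPos_spec {k : Fin d → ℕ} (hk : k ≠ 0) :
    ∃ jF : Fin d, (jF : ℕ) = mPos k ∧ k jF ≠ 0 := by
  have hne : {m : ℕ | ∃ j : Fin d, (j : ℕ) = m ∧ k j ≠ 0}.Nonempty := by
    have : ∃ j, k j ≠ 0 := by
      by_contra h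
      push_neg at h
      exact hk (funext fun i => h i)
    obtain ⟨j, hj⟩ := this
    exact ⟨j, j, rfl, hj⟩
  have := Nat.sInf_mem hne
  obtain ⟨j, hj1, hj2⟩ := this
  exact ⟨j, hj1, hj2⟩

lemma mPos_le {k : Fin d → ℕ} {i : Fin d} (hi : k i ≠ 0) : mPos k ≤ (i : ℕ) :=
  Nat.sInf_le ⟨i, rfl, hi⟩

lemma eq_zero_of_lt_mPos {k : Fin d → ℕ} {i : Fin d} (hi : (i : ℕ) < mPos k) : k i = 0 := by
  by_contra h
  exact absurd (mPos_le h) (not_le.mpr hi)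

lemma mPos_eq {k : Fin d → ℕ} {j : Fin d} (hj : k j ≠ 0)
    (hlow : ∀ i : Fin d, (i : ℕ) < (j : ℕ) → k i = 0) : mPos k = (j : ℕ) := by
  refine le_antisymm (mPos_le hj) ?_
  by_contra h
  push_neg at h
  have hk : k ≠ 0 := by
    intro h0; apply hj; rw [h0]; rfl
  obtain ⟨jF, hjF, hjF2⟩ := mPos_spec hk
  exact hjF2 (hlow jF (hjF ▸ h))

-- single as ℕ multiindex
def esgl (i : Fin d) : Fin d → ℕ := fun j => if j = i then 1 else 0

lemma add_esgl_apply (k : Fin d → ℕ) (i j : Fin d) :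
    (k + esgl i) j = k j + if j = i then 1 else 0 := rfl

lemma mPos_add_esgl {k : Fin d → ℕ} {i : Fin d} (hi : (i : ℕ) ≤ mPos k) :
    mPos (k + esgl i) = (i : ℕ) := by
  apply mPos_eq
  · simp [add_esgl_apply, esgl]
  · intro m hm
    have h1 : k m = 0 := eq_zero_of_lt_mPos (lt_of_lt_of_le hm hi)
    have h2 : m ≠ i := fun h => by simp [h] at hm
    simp [add_esgl_apply, esgl, h1, h2]

lemma kdown_add_esgl {k : Fin d → ℕ} {i : Fin d} (hi : (i : ℕ) ≤ mPos k) :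
    kdown (k + esgl i) = k := by
  funext m
  simp only [kdown, mPos_add_esgl hi, add_esgl_apply]
  by_cases h : m = i
  · subst h; simp
  · have : (m : ℕ) ≠ (i : ℕ) := fun hc => h (Fin.ext hc)
    simp [h, this]

lemma kdown_le (k : Fin d → ℕ) : kdown k ≤ k := by
  intro i
  simp only [kdown]
  split <;> omega

lemma mPos_le_mPos_kdown {k : Fin d → ℕ} (hk : kdown k ≠ 0) : mPos k ≤ mPos (kdown k) := by
  obtain ⟨jF, hjF, hjF2⟩ := mPos_spec hk
  rw [← hjF]
  apply mPos_le
  intro h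
  apply hjF2
  simp only [kdown]
  split <;> omega

lemma eq_add_esgl_of_ne_zero {k : Fin d → ℕ} (jF : Fin d) (hjF : (jF : ℕ) = mPos k)
    (hne : k jF ≠ 0) : k = kdown k + esgl jF := by
  funext m
  simp only [kdown, add_esgl_apply, esgl]
  by_cases h : m = jF
  · subst h; simp [hjF]; omega
  · have : (m : ℕ) ≠ mPos k := by
      rw [← hjF]; exact fun hc => h (Fin.ext hc)
    simp [h, this]

lemma mderiv_zero (f : (Fin d → ℝ) → ℝ) : mderiv 0 f = f := by
  unfold mderiv
  induction (List.finRange d) with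
  | nil => rfl
  | cons a L ih => simp [List.foldr_cons, ih]

lemma foldr_notmem (f : (Fin d → ℝ) → ℝ) (k : Fin d → ℕ) (j : Fin d) :
    ∀ L : List (Fin d), j ∉ L →
      List.foldr (fun i g => (pd i)^[(k + esgl j) i] g) f L =
        List.foldr (fun i g => (pd i)^[k i] g) f L := by
  intro L
  induction L with
  | nil => intro _; rfl
  | cons b M ihM =>
    intro hjL
    have hbj : b ≠ j := fun hc => hjL (by simp [hc])
    have hb : (k + esgl j) b = k b := by simp [esgl, hbj]
    simp only [List.foldr_cons, hb, ihM (fun hc => hjL (List.mem_cons_of_mem _ hc))]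

lemma foldr_aux (f : (Fin d → ℝ) → ℝ) (k : Fin d → ℕ) (j : Fin d)
    (h0 : ∀ i : Fin d, i < j → k i = 0) :
    ∀ L : List (Fin d), L.Pairwise (· < ·) → j ∈ L →
      List.foldr (fun i g => (pd i)^[(k + esgl j) i] g) f L =
        pd j (List.foldr (fun i g => (pd i)^[k i] g) f L) := by
  intro L
  induction L with
  | nil => intro _ h; simp at h
  | cons a L ih =>
    intro hp hj
    rcases List.mem_cons.mp hj with h | h
    · subst h
      have hjL : j ∉ L := by
        intro hc
        exact lt_irrefl j ((List.pairwise_cons.mp hp).1 j hc)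
      simp only [List.foldr_cons, foldr_notmem f k j L hjL]
      have : (k + esgl j) j = k j + 1 := by simp [esgl]
      rw [this, Function.iterate_succ_apply']
  
    · have hp' := (List.pairwise_cons.mp hp).2
      have haj : a < j := (List.pairwise_cons.mp hp).1 j h
      have hka : k a = 0 := h0 a haj
      have : (k + esgl j) a = 0 := by simp [esgl, hka, Fin.ne_of_lt haj]
      simp only [List.foldr_cons, this, hka, Function.iterate_zero, id_eq]
      exact ih hp' h

lemma mderiv_add_esgl (f : (Fin d → ℝ) → ℝ) (k : Fin d → ℕ) (j : Fin d)
    (h0 : ∀ i : Fin d, i < j → k i = 0) :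
    mderiv (k + esgl j) f = pd j (mderiv k f) :=
  foldr_aux f k j h0 (List.finRange d) (List.pairwise_lt_finRange d) (List.mem_finRange j)

def emb1 (j : ℕ) (t : ℝ) : Fin d → ℝ :=
  fun i => if (i : ℕ) < j then 1 else if (i : ℕ) = j then t else 0

def Epoint (x : Fin d → ℝ) (j : ℕ) (t : ℝ) : Fin d → ℝ :=
  fun i => if (i : ℕ) < j then x i else if (i : ℕ) = j then x i * t else 0

-- trunc lemmas
lemma trunc_self (x : Fin d → ℝ) : trunc d x = x := by
  funext i; simp [trunc, i.isLt]

lemma trunc_zero' (x : Fin d → ℝ) : trunc 0 x = 0 := by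
  funext i; simp [trunc]

lemma trunc_mul_emb1 {p j : ℕ} (hpj : p ≤ j) (x : Fin d → ℝ) (t : ℝ) :
    trunc p (fun i => x i * emb1 j t i) = trunc p x := by
  funext i
  simp only [trunc, emb1]
  by_cases h : (i : ℕ) < p
  · have : (i : ℕ) < j := lt_of_lt_of_le h hpj
    simp [h, this]
  · simp [h]

lemma trunc_succ_mul_emb1 (j : ℕ) (x : Fin d → ℝ) (t : ℝ) :
    trunc (j + 1) (fun i => x i * emb1 j t i) = Epoint x j t := by
  funext i
  simp only [trunc, emb1, Epoint]
  rcases lt_trichotomy (i : ℕ) j with h | h | h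
  · simp [h, Nat.lt_succ_of_lt h]
  · simp [h]
  · have h1 : ¬ (i : ℕ) < j + 1 := by omega
    have h2 : ¬ (i : ℕ) < j := by omega
    have h3 : (i : ℕ) ≠ j := by omega
    simp [h1, h2, h3]

lemma trunc_mul_one (p : ℕ) (x : Fin d → ℝ) :
    trunc p (fun i => x i * (1 : Fin d → ℝ) i) = trunc p x := by
  funext i; simp [trunc]

lemma Epoint_eq_affine {x : Fin d → ℝ} {j : ℕ} {jF : Fin d} (hjF : (jF : ℕ) = j) (t : ℝ) :
    Epoint x j t = trunc j x + (x jF * t) • (Pi.single jF 1 : Fin d → ℝ) := by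
  funext i
  simp only [Epoint, trunc, Pi.add_apply, Pi.smul_apply, smul_eq_mul]
  by_cases h : (i : ℕ) < j
  · have : i ≠ jF := by intro hc; subst hc; omega
    simp [h, Pi.single_apply, this]
  · by_cases h2 : (i : ℕ) = j
    · have : i = jF := Fin.ext (by omega)
      subst this
      simp [h, h2, Pi.single_apply]
    · have : i ≠ jF := by intro hc; subst hc; omega
      simp [h, h2, Pi.single_apply, this]

lemma Epoint_one (x : Fin d → ℝ) (j : ℕ) : Epoint x j 1 = trunc (j + 1) x := by
  funext i
  simp only [Epoint, trunc]
  rcases lt_trichotomy (i : ℕ) j with h | h | h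
  · simp [h, Nat.lt_succ_of_lt h]
  · simp [h]
  · have h1 : ¬ (i : ℕ) < j + 1 := by omega
    have h2 : ¬ (i : ℕ) < j := by omega
    have h3 : (i : ℕ) ≠ j := by omega
    simp [h1, h2, h3]

lemma Epoint_zero (x : Fin d → ℝ) (j : ℕ) : Epoint x j 0 = trunc j x := by
  funext i
  simp only [Epoint, trunc]
  by_cases h : (i : ℕ) < j
  · simp [h]
  · by_cases h2 : (i : ℕ) = j <;> simp [h, h2]

lemma continuous_trunc (p : ℕ) : Continuous (trunc (d := d) p) := by
  unfold trunc
  exact continuous_pi fun i => by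
    by_cases h : (i : ℕ) < p
    · simpa [h] using continuous_apply i
    · simp [h]; exact continuous_const

lemma continuous_emb1 (j : ℕ) : Continuous (emb1 (d := d) j) := by
  unfold emb1
  exact continuous_pi fun i => by
    by_cases h : (i : ℕ) < j
    · simp [h]; exact continuous_const
    · by_cases h2 : (i : ℕ) = j
      · simpa [h, h2] using continuous_id'
      · simp [h, h2]; exact continuous_const

/-- The 1-dimensional density measure. -/
noncomputable def nu (l : ℕ) : Measure ℝ :=
  (volume.restrict (Set.Icc (0 : ℝ) 1)).withDensity fun y =>
    ENNReal.ofReal ((l : ℝ) * (1 - y) ^ (l - 1))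

lemma nu_finite (l : ℕ) : IsFiniteMeasure (nu l) := by
  constructor
  rw [nu, withDensity_apply _ MeasurableSet.univ, Measure.restrict_univ]
  calc ∫⁻ y, ENNReal.ofReal ((l : ℝ) * (1 - y) ^ (l - 1)) ∂(volume.restrict (Set.Icc (0:ℝ) 1))
      ≤ ∫⁻ _, ENNReal.ofReal l ∂(volume.restrict (Set.Icc (0:ℝ) 1)) := by
        apply lintegral_mono_ae
        filter_upwards [ae_restrict_mem measurableSet_Icc] with y hy
        apply ENNReal.ofReal_le_ofReal
        have h1 : (0:ℝ) ≤ 1 - y := by linarith [hy.2]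
        have h2 : (1 - y : ℝ) ≤ 1 := by linarith [hy.1]
        calc (l : ℝ) * (1 - y) ^ (l - 1) ≤ (l : ℝ) * 1 := by
              apply mul_le_mul_of_nonneg_left _ (Nat.cast_nonneg l)
              exact pow_le_one₀ h1 h2
          _ = l := mul_one _
    _ = ENNReal.ofReal l * volume (Set.Icc (0:ℝ) 1) := by
        rw [lintegral_const, Measure.restrict_apply MeasurableSet.univ, Set.univ_inter]
    _ < ⊤ := by
        rw [Real.volume_Icc]
        exact ENNReal.mul_lt_top ENNReal.ofReal_lt_top ENNReal.ofReal_lt_top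

lemma Qmeas_map {m : Fin d → ℕ} (hm : ¬ ∀ j, m j = 0) {jF : Fin d} (hjF : (jF : ℕ) = mPos m) :
    Qmeas m = Measure.map (emb1 (mPos m)) (nu (m jF)) := by
  haveI := nu_finite (m jF)
  rw [Qmeas]
  have hSF : ∀ i : Fin d, SigmaFinite
      (if ∀ j, m j = 0 then Measure.dirac (1 : ℝ)
       else if (i : ℕ) < mPos m then Measure.dirac 1
       else if (i : ℕ) = mPos m then
         (volume.restrict (Set.Icc (0 : ℝ) 1)).withDensity fun y =>
           ENNReal.ofReal ((m i : ℝ) * (1 - y) ^ (m i - 1))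
       else Measure.dirac 0) := by
    intro i
    simp only [hm, if_false]
    by_cases h1 : (i : ℕ) < mPos m
    · simp only [h1, if_true]; infer_instance
    · by_cases h2 : (i : ℕ) = mPos m
      · have hi : i = jF := Fin.ext (by omega)
        subst hi
        rw [if_neg h1, if_pos h2]
        exact (nu_finite (m i)).toSigmaFinite
      · simp only [h1, h2, if_false]; infer_instance
  refine @Measure.pi_eq _ _ _ _ _ hSF _ ?_
  intro s hs
  rw [Measure.map_apply (continuous_emb1 _).measurable (MeasurableSet.univ_pi hs)]
  by_cases hc : ∀ i : Fin d, i ≠ jF → (if (i : ℕ) < mPos m then (1:ℝ) else 0) ∈ s i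
  · have hpre : emb1 (mPos m) ⁻¹' Set.univ.pi s = s jF := by
      ext t
      simp only [Set.mem_preimage, Set.mem_univ_pi]
      constructor
      · intro h
        have := h jF
        simp only [emb1, hjF, lt_irrefl, if_false, if_true] at this
        simpa using this
      · intro ht i
        by_cases h : i = jF
        · subst h
          simpa [emb1, hjF] using ht
        · have hne : (i : ℕ) ≠ mPos m := by
            rw [← hjF]; exact fun hc' => h (Fin.ext hc')
          have := hc i h
          by_cases hlt : (i : ℕ) < mPos m
          · simpa [emb1, hlt] using (by simpa [hlt] using this)
          · simpa [emb1, hlt, hne] using (by simpa [hlt] using this)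
    rw [hpre]
    rw [Finset.prod_eq_single jF]
    · rw [if_neg hm, if_neg (by rw [hjF]; exact lt_irrefl _), if_pos hjF]
      rfl
    · intro i _ hne
      have hnei : (i : ℕ) ≠ mPos m := by
        rw [← hjF]; exact fun hc' => hne (Fin.ext hc')
      rw [if_neg hm]
      by_cases hlt : (i : ℕ) < mPos m
      · rw [if_pos hlt, Measure.dirac_apply' _ (hs i)]
        have := hc i hne
        rw [if_pos hlt] at this
        simp [Set.indicator_of_mem this]
      · rw [if_neg hlt, if_neg hnei, Measure.dirac_apply' _ (hs i)]
        have := hc i hne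
        rw [if_neg hlt] at this
        simp [Set.indicator_of_mem this]
        
    · intro h
      exact absurd (Finset.mem_univ jF) h
  · push_neg at hc
    obtain ⟨i₀, hi₀ne, hi₀⟩ := hc
    have hpre : emb1 (mPos m) ⁻¹' Set.univ.pi s = ∅ := by
      ext t
      simp only [Set.mem_preimage, Set.mem_univ_pi, Set.mem_empty_iff_false, iff_false]
      intro h
      have := h i₀
      have hne : (i₀ : ℕ) ≠ mPos m := by
        rw [← hjF]; exact fun hc' => hi₀ne (Fin.ext hc')
      by_cases hlt : (i₀ : ℕ) < mPos m
      · rw [if_pos hlt] at hi₀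
        simp only [emb1, hlt, if_true] at this
        exact hi₀ this
      · rw [if_neg hlt] at hi₀
        simp only [emb1, hlt, hne, if_false] at this
        exact hi₀ this
    rw [hpre]
    simp only [measure_empty]
    symm
    apply Finset.prod_eq_zero (Finset.mem_univ i₀)
    have hne : (i₀ : ℕ) ≠ mPos m := by
      rw [← hjF]; exact fun hc' => hi₀ne (Fin.ext hc')
    rw [if_neg hm]
    by_cases hlt : (i₀ : ℕ) < mPos m
    · rw [if_pos hlt, Measure.dirac_apply' _ (hs i₀)]
      rw [if_pos hlt] at hi₀
      simp [Set.indicator_of_notMem hi₀]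
    · rw [if_neg hlt, if_neg hne, Measure.dirac_apply' _ (hs i₀)]
      rw [if_neg hlt] at hi₀
      simp [Set.indicator_of_notMem hi₀]

lemma Qmeas_dirac {m : Fin d → ℕ} (h0 : ∀ j, m j = 0) :
    Qmeas m = Measure.dirac (1 : Fin d → ℝ) := by
  have hmu : (fun i : Fin d =>
      if ∀ j, m j = 0 then Measure.dirac (1:ℝ)
      else if (i : ℕ) < mPos m then Measure.dirac 1
      else if (i : ℕ) = mPos m then
        (volume.restrict (Set.Icc (0 : ℝ) 1)).withDensity fun y =>
          ENNReal.ofReal ((m i : ℝ) * (1 - y) ^ (m i - 1))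
      else Measure.dirac 0) = fun _ : Fin d => Measure.dirac (1:ℝ) := by
    funext i; rw [if_pos h0]
  rw [Qmeas, hmu]
  refine Measure.pi_eq ?_
  intro s hs
  rw [Measure.dirac_apply' _ (MeasurableSet.univ_pi hs)]
  by_cases hc : ∀ i, (1 : ℝ) ∈ s i
  · rw [Set.indicator_of_mem (by simpa [Set.mem_univ_pi] using hc)]
    rw [Finset.prod_eq_one]
    · rfl
    intro i _
    rw [Measure.dirac_apply' _ (hs i), Set.indicator_of_mem (hc i)]
    rfl
  · push_neg at hc
    obtain ⟨i₀, hi₀⟩ := hc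
    rw [Set.indicator_of_notMem (by simp [Set.mem_univ_pi]; exact ⟨i₀, hi₀⟩)]
    symm
    apply Finset.prod_eq_zero (Finset.mem_univ i₀)
    rw [Measure.dirac_apply' _ (hs i₀), Set.indicator_of_notMem hi₀]

lemma integral_Qmeas_dirac {m : Fin d → ℕ} (h0 : ∀ j, m j = 0)
    {h : (Fin d → ℝ) → ℝ} (hh : Continuous h) :
    ∫ y, h y ∂ Qmeas m = h 1 := by
  rw [Qmeas_dirac h0, integral_dirac' _ _ hh.stronglyMeasurable]

lemma integral_Qmeas_ne {m : Fin d → ℕ} (hm : ¬ ∀ j, m j = 0) {jF : Fin d}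
    (hjF : (jF : ℕ) = mPos m) {h : (Fin d → ℝ) → ℝ} (hh : Continuous h) :
    ∫ y, h y ∂ Qmeas m =
      ∫ t in (0:ℝ)..1, ((m jF : ℝ) * (1 - t) ^ (m jF - 1)) * h (emb1 (mPos m) t) := by
  rw [Qmeas_map hm hjF,
    integral_map (continuous_emb1 _).measurable.aemeasurable hh.aestronglyMeasurable, nu]
  have hd : (fun y : ℝ => ENNReal.ofReal ((m jF : ℝ) * (1 - y) ^ (m jF - 1))) =
      fun y : ℝ =>
        ((Real.toNNReal ((m jF : ℝ) * (1 - y) ^ (m jF - 1)) : ℝ≥0) : ℝ≥0∞) := rfl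
  have hmeas : Measurable fun y : ℝ => Real.toNNReal ((m jF : ℝ) * (1 - y) ^ (m jF - 1)) := by
    apply measurable_real_toNNReal.comp
    fun_prop
  rw [hd, integral_withDensity_eq_integral_smul hmeas]
  rw [integral_Icc_eq_integral_Ioc, intervalIntegral.integral_of_le zero_le_one]
  apply setIntegral_congr_fun measurableSet_Ioc
  intro y hy
  have hv : (0:ℝ) ≤ (m jF : ℝ) * (1 - y) ^ (m jF - 1) := by
    apply mul_nonneg (Nat.cast_nonneg _)
    apply pow_nonneg
    linarith [hy.2]
  simp [NNReal.smul_def, Real.coe_toNNReal _ hv]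

lemma mass_one {l : ℕ} (hl : 1 ≤ l) :
    ∫ t in (0:ℝ)..1, (l : ℝ) * (1 - t) ^ (l - 1) = 1 := by
  rw [intervalIntegral.integral_const_mul]
  have h1 : ∫ t in (0:ℝ)..1, (1 - t) ^ (l - 1) = ∫ t in (0:ℝ)..1, t ^ (l - 1) := by
    have := intervalIntegral.integral_comp_sub_left (a := 0) (b := 1)
      (fun u => u ^ (l - 1)) 1
    simpa using this
  rw [h1, integral_pow]
  have : (l : ℝ) ≠ 0 := by
    simp; omega
  have hll : l - 1 + 1 = l := by omega
  rw [hll]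
  field_simp
  rw [one_pow, zero_pow (by omega), Nat.cast_sub hl]; push_cast; ring

lemma continuous_Epoint (x : Fin d → ℝ) (j : ℕ) : Continuous fun t => Epoint x j t := by
  unfold Epoint
  apply continuous_pi
  intro i
  by_cases h : (i : ℕ) < j
  · simp only [h, if_true]; exact continuous_const
  · by_cases h2 : (i : ℕ) = j
    · simp only [h, h2, lt_self_iff_false, if_true, if_false]
      exact (continuous_const (y := x i)).mul continuous_id
    · simp only [h, h2, if_false]; exact continuous_const

lemma hasDerivAt_Epoint {g : (Fin d → ℝ) → ℝ} (hg : Differentiable ℝ g)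
    (x : Fin d → ℝ) {j : ℕ} {jF : Fin d} (hjF : (jF : ℕ) = j) (t : ℝ) :
    HasDerivAt (fun u => g (Epoint x j u)) (x jF * pd jF g (Epoint x j t)) t := by
  have hE : ∀ u, Epoint x j u = trunc j x + (x jF * u) • (Pi.single jF 1 : Fin d → ℝ) :=
    Epoint_eq_affine hjF
  have hEd : HasDerivAt (fun u => Epoint x j u)
      ((x jF) • (Pi.single jF 1 : Fin d → ℝ)) t := by
    simp only [hE]
    have h1 : HasDerivAt (fun u : ℝ => x jF * u) (x jF) t := by
      simpa using (hasDerivAt_id t).const_mul (x jF)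
    exact (h1.smul_const _).const_add _
  have := ((hg (Epoint x j t)).hasFDerivAt).comp_hasDerivAt t hEd
  have h' : HasDerivAt (fun u => g (Epoint x j u))
      (fderiv ℝ g (Epoint x j t) ((x jF) • (Pi.single jF 1 : Fin d → ℝ))) t := this
  simpa [pd, ContinuousLinearMap.map_smul, smul_eq_mul, mul_comm] using h'

/-- FTC step. -/
lemma ftc_E {g : (Fin d → ℝ) → ℝ} (hg : Differentiable ℝ g)
    (hc : Continuous (pd (d := d) jF g))
    (x : Fin d → ℝ) {j : ℕ} (hjF : ((jF : Fin d) : ℕ) = j) :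
    g (trunc (j + 1) x) - g (trunc j x)
      = ∫ t in (0:ℝ)..1, x jF * pd jF g (Epoint x j t) := by
  rw [intervalIntegral.integral_eq_sub_of_hasDerivAt
    (f := fun u => g (Epoint x j u))
    (fun t _ => hasDerivAt_Epoint hg x hjF t) ?_]
  · rw [Epoint_one, Epoint_zero]
  · exact (continuous_const.mul (hc.comp (continuous_Epoint x j))).intervalIntegrable _ _

/-- Integration by parts step. -/
lemma ibp {l : ℕ} (hl : 2 ≤ l) {φ dφ : ℝ → ℝ}
    (hd : ∀ t, HasDerivAt φ (dφ t) t) (hc : Continuous dφ) :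
    ∫ t in (0:ℝ)..1, ((l : ℝ) - 1) * (1 - t) ^ (l - 2) * (φ t - φ 0)
      = ∫ t in (0:ℝ)..1, (1 - t) ^ (l - 1) * dφ t := by
  have hφc : Continuous φ := by
    have : ∀ t, DifferentiableAt ℝ φ t := fun t => (hd t).differentiableAt
    exact (Differentiable.continuous this)
  set A : ℝ → ℝ := fun t => ((l : ℝ) - 1) * (1 - t) ^ (l - 2) * (φ t - φ 0) with hA
  set B : ℝ → ℝ := fun t => (1 - t) ^ (l - 1) * dφ t with hB
  have hAc : Continuous A := by
    apply Continuous.mul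
    · exact continuous_const.mul ((continuous_const.sub continuous_id).pow _)
    · exact hφc.sub continuous_const
  have hBc : Continuous B := ((continuous_const.sub continuous_id).pow _).mul hc
  have hder : ∀ t : ℝ, HasDerivAt (fun u => -((1 - u) ^ (l - 1) * (φ u - φ 0)))
      (A t - B t) t := by
    intro t
    have hb : HasDerivAt (fun u : ℝ => 1 - u) (-1) t := (hasDerivAt_id t).const_sub 1
    have h1 : HasDerivAt (fun u : ℝ => (1 - u) ^ (l - 1))
        (((l - 1 : ℕ) : ℝ) * (1 - t) ^ (l - 1 - 1) * (-1)) t := hb.pow (l - 1)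
    have h2 : HasDerivAt (fun u => φ u - φ 0) (dφ t) t := (hd t).sub_const _
    have this : HasDerivAt (fun u => -((1 - u) ^ (l - 1) * (φ u - φ 0)))
        (-(((l - 1 : ℕ) : ℝ) * (1 - t) ^ (l - 1 - 1) * (-1) * (φ t - φ 0)
          + (1 - t) ^ (l - 1) * dφ t)) t := (h1.mul h2).neg
    convert this using 1
    have e1 : l - 1 - 1 = l - 2 := by omega
    have e2 : ((l - 1 : ℕ) : ℝ) = (l : ℝ) - 1 := by
      have h1l : (1:ℕ) ≤ l := by omega
      push_cast [h1l]; ring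
    rw [hA, hB, e1, e2]
    ring
  have hint : ∫ t in (0:ℝ)..1, (A t - B t)
      = -((1 - (1:ℝ)) ^ (l - 1) * (φ 1 - φ 0)) - -((1 - (0:ℝ)) ^ (l - 1) * (φ 0 - φ 0)) :=
    intervalIntegral.integral_eq_sub_of_hasDerivAt (fun t _ => hder t)
      ((hAc.sub hBc).intervalIntegrable _ _)
  have hz : (1 - (1:ℝ)) ^ (l - 1) = 0 := by
    rw [sub_self]
    exact zero_pow (by omega)
  rw [hz] at hint
  simp only [zero_mul, neg_zero, sub_self, mul_zero, sub_zero] at hint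
  rw [intervalIntegral.integral_sub (hAc.intervalIntegrable _ _) (hBc.intervalIntegrable _ _)]
    at hint
  linarith [hint]



-- ### sdeg lemmas

lemma sdeg_zero (s : Fin d → ℝ) : sdeg s 0 = 0 := by
  simp [sdeg]

lemma sdeg_mono {s : Fin d → ℝ} (hs : ∀ i, 0 < s i) {m k : Fin d → ℕ} (h : m ≤ k) :
    sdeg s m ≤ sdeg s k := by
  apply Finset.sum_le_sum
  intro i _
  exact mul_le_mul_of_nonneg_left (Nat.cast_le.mpr (h i)) (hs i).le

lemma sdeg_add_esgl (s : Fin d → ℝ) (k : Fin d → ℕ) (i : Fin d) :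
    sdeg s (k + esgl i) = sdeg s k + s i := by
  unfold sdeg
  have : ∀ i', s i' * (((k + esgl i) i' : ℕ) : ℝ)
      = s i' * (k i' : ℝ) + (if i' = i then s i' else 0) := by
    intro i'
    simp only [Pi.add_apply, esgl]
    by_cases hii : i' = i
    · subst hii; simp; push_cast; ring
    · simp [hii]
  rw [Finset.sum_congr rfl fun i' _ => this i', Finset.sum_add_distrib]
  congr 1
  simp [Finset.sum_ite_eq']

lemma eq_of_le_of_sdeg_le {s : Fin d → ℝ} (hs : ∀ i, 0 < s i) {m k : Fin d → ℕ}
    (h : m ≤ k) (hd : sdeg s k ≤ sdeg s m) : m = k := by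
  by_contra hne
  have : ∃ i₀, m i₀ < k i₀ := by
    by_contra hc
    push_neg at hc
    exact hne (funext fun i => le_antisymm (h i) (hc i))
  obtain ⟨i₀, hi₀⟩ := this
  have hlt : sdeg s m + s i₀ ≤ sdeg s k := by
    have : sdeg s (m + esgl i₀) ≤ sdeg s k := by
      apply sdeg_mono hs
      intro i
      simp only [Pi.add_apply, esgl]
      by_cases hii : i = i₀
      · subst hii; simp; omega
      · simp [hii]; exact h i
    rwa [sdeg_add_esgl] at this
  linarith [hs i₀]

-- ### product lemmas

lemma prod_pow_add (x : Fin d → ℝ) (m : Fin d → ℕ) (jF : Fin d) :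
    (∏ i, x i ^ ((m + esgl jF) i)) = (∏ i, x i ^ m i) * x jF := by
  have : ∀ i, x i ^ ((m + esgl jF) i) = x i ^ m i * (if i = jF then x i else 1) := by
    intro i
    simp only [Pi.add_apply, esgl]
    by_cases hii : i = jF
    · subst hii; simp [pow_add]
    · simp [hii]
  rw [Finset.prod_congr rfl fun i _ => this i, Finset.prod_mul_distrib]
  congr 1
  simp [Finset.prod_ite_eq']

lemma prod_fact_add (m : Fin d → ℕ) (jF : Fin d) :
    (∏ i, ((m + esgl jF) i).factorial) = (∏ i, (m i).factorial) * (m jF + 1) := by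
  have : ∀ i, ((m + esgl jF) i).factorial
      = (m i).factorial * (if i = jF then m jF + 1 else 1) := by
    intro i
    simp only [Pi.add_apply, esgl]
    by_cases hii : i = jF
    · subst hii; simp [Nat.factorial_succ, mul_comm]
    · simp [hii]
  rw [Finset.prod_congr rfl fun i _ => this i, Finset.prod_mul_distrib]
  congr 1
  simp [Finset.prod_ite_eq']

lemma prod_fact_pos (m : Fin d → ℕ) : (0:ℝ) < ((∏ i, (m i).factorial : ℕ) : ℝ) := by
  have : 0 < ∏ i, (m i).factorial := Finset.prod_pos fun i _ => Nat.factorial_pos _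
  exact_mod_cast this

-- ### continuity of the integrand

lemma continuous_deltaK {g : (Fin d → ℝ) → ℝ} (hg : Continuous g) (κ : Fin d → ℕ)
    (x : Fin d → ℝ) :
    Continuous fun y : Fin d → ℝ => deltaK κ g (fun i => x i * y i) := by
  unfold deltaK
  have hmul : Continuous fun y : Fin d → ℝ => (fun i => x i * y i) :=
    continuous_pi fun i => continuous_const.mul (continuous_apply i)
  exact (hg.comp ((continuous_trunc _).comp hmul)).sub
    (hg.comp ((continuous_trunc _).comp hmul))

-- ### the two summands

/-- coefficient term -/
noncomputable def coefT (f : (Fin d → ℝ) → ℝ) (x : Fin d → ℝ) (k : Fin d → ℕ) : ℝ :=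
  (((∏ i, (k i).factorial : ℕ) : ℝ))⁻¹ * mderiv k f 0 * ∏ i, x i ^ k i

/-- remainder term -/
noncomputable def remT (f : (Fin d → ℝ) → ℝ) (x : Fin d → ℝ) (k : Fin d → ℕ) : ℝ :=
  ((∏ i, x i ^ kdown k i) / ((∏ i, (kdown k i).factorial : ℕ) : ℝ)) *
    ∫ y : Fin d → ℝ,
      deltaK k (mderiv (kdown k) f) (fun i => x i * y i) ∂ Qmeas (kdown k)

-- ### evaluation of the boundary terms for `k + eᵢ`, `i ≤ 𝔪(k)`

lemma remT_lt_mPos (f : (Fin d → ℝ) → ℝ) (x : Fin d → ℝ) {k : Fin d → ℕ} {jF : Fin d}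
    (hjF : (jF : ℕ) = mPos k) (hkjF : k jF ≠ 0) (hcont : Continuous (mderiv k f))
    {i : Fin d} (hi : (i : ℕ) < mPos k) :
    remT f x (k + esgl i) =
      (∏ i', x i' ^ k i') / ((∏ i', (k i').factorial : ℕ) : ℝ) *
        (mderiv k f (trunc ((i : ℕ) + 1) x) - mderiv k f (trunc (i : ℕ) x)) := by
  have hile : (i : ℕ) ≤ mPos k := hi.le
  have hm : ¬ ∀ j, k j = 0 := fun h => hkjF (h jF)
  rw [remT, kdown_add_esgl hile,
    integral_Qmeas_ne hm hjF (continuous_deltaK hcont _ x)]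
  simp only [deltaK, mPos_add_esgl hile, trunc_mul_emb1 (Nat.succ_le_of_lt hi) x,
    trunc_mul_emb1 hile x]
  rw [intervalIntegral.integral_mul_const, mass_one (Nat.one_le_iff_ne_zero.mpr hkjF),
    one_mul]

lemma remT_eq_mPos (f : (Fin d → ℝ) → ℝ) (x : Fin d → ℝ) {k : Fin d → ℕ} {jF : Fin d}
    (hjF : (jF : ℕ) = mPos k) (hkjF : k jF ≠ 0) (hcont : Continuous (mderiv k f)) :
    remT f x (k + esgl jF) =
      (∏ i', x i' ^ k i') / ((∏ i', (k i').factorial : ℕ) : ℝ) *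
        ((∫ t in (0:ℝ)..1, ((k jF : ℝ) * (1 - t) ^ (k jF - 1)) *
            mderiv k f (Epoint x (mPos k) t)) - mderiv k f (trunc (mPos k) x)) := by
  have hile : (jF : ℕ) ≤ mPos k := le_of_eq hjF
  have hm : ¬ ∀ j, k j = 0 := fun h => hkjF (h jF)
  rw [remT, kdown_add_esgl hile,
    integral_Qmeas_ne hm hjF (continuous_deltaK hcont _ x)]
  simp only [deltaK, mPos_add_esgl hile, hjF, trunc_succ_mul_emb1 (mPos k) x,
    trunc_mul_emb1 (le_refl (mPos k)) x]
  congr 1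
  have hw : Continuous fun t : ℝ => (k jF : ℝ) * (1 - t) ^ (k jF - 1) :=
    continuous_const.mul ((continuous_const.sub continuous_id).pow _)
  have hφ : Continuous fun t : ℝ => mderiv k f (Epoint x (mPos k) t) :=
    hcont.comp (continuous_Epoint x _)
  have hsplit : ∀ t : ℝ, ((k jF : ℝ) * (1 - t) ^ (k jF - 1)) *
        (mderiv k f (Epoint x (mPos k) t) - mderiv k f (trunc (mPos k) x))
      = ((k jF : ℝ) * (1 - t) ^ (k jF - 1)) * mderiv k f (Epoint x (mPos k) t)
        - ((k jF : ℝ) * (1 - t) ^ (k jF - 1)) * mderiv k f (trunc (mPos k) x) := by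
    intro t; ring
  rw [intervalIntegral.integral_congr (g := fun t =>
      ((k jF : ℝ) * (1 - t) ^ (k jF - 1)) * mderiv k f (Epoint x (mPos k) t)
        - ((k jF : ℝ) * (1 - t) ^ (k jF - 1)) * mderiv k f (trunc (mPos k) x))
      (fun t _ => hsplit t),
    intervalIntegral.integral_sub
      (f := fun t => ((k jF : ℝ) * (1 - t) ^ (k jF - 1)) * mderiv k f (Epoint x (mPos k) t))
      (g := fun t => ((k jF : ℝ) * (1 - t) ^ (k jF - 1)) * mderiv k f (trunc (mPos k) x))
      ((hw.mul hφ).intervalIntegrable _ _)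
      ((hw.mul continuous_const).intervalIntegrable _ _),
    intervalIntegral.integral_mul_const, mass_one (Nat.one_le_iff_ne_zero.mpr hkjF), one_mul]

lemma remT_self (s : Fin d → ℝ) (hs : ∀ i, 0 < s i) {r : ℝ} (f : (Fin d → ℝ) → ℝ)
    (hfc : ∀ k : Fin d → ℕ, sdeg s k ≤ r → Continuous (mderiv k f))
    (hfd : ∀ k : Fin d → ℕ, sdeg s k < r → Differentiable ℝ (mderiv k f))
    (x : Fin d → ℝ) {k : Fin d → ℕ} {jF : Fin d}
    (hjF : (jF : ℕ) = mPos k) (hkjF : k jF ≠ 0) (hdeg : sdeg s k < r) :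
    remT f x k =
      (∏ i', x i' ^ k i') / ((∏ i', (k i').factorial : ℕ) : ℝ) *
        ∫ t in (0:ℝ)..1,
          ((k jF : ℝ) * (1 - t) ^ (k jF - 1)) * mderiv k f (Epoint x (mPos k) t) := by
  have heq : k = kdown k + esgl jF := eq_add_esgl_of_ne_zero jF hjF hkjF
  have hmle : kdown k ≤ k := kdown_le k
  have hmdeg : sdeg s (kdown k) < r := lt_of_le_of_lt (sdeg_mono hs hmle) hdeg
  have hgd : Differentiable ℝ (mderiv (kdown k) f) := hfd _ hmdeg
  have hgc : Continuous (mderiv (kdown k) f) := hfc _ hmdeg.le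
  have hkc : Continuous (mderiv k f) := hfc _ hdeg.le
  have hlow : ∀ i : Fin d, i < jF → kdown k i = 0 := by
    intro i hij
    have h1 : (i : ℕ) < mPos k := by
      rw [← hjF]; exact_mod_cast hij
    have hk0 : k i = 0 := eq_zero_of_lt_mPos h1
    simp only [kdown]
    split <;> omega
  have hpd : mderiv k f = pd jF (mderiv (kdown k) f) := by
    conv_lhs => rw [heq]
    exact mderiv_add_esgl f (kdown k) jF hlow
  have hX : (∏ i', x i' ^ k i') = (∏ i', x i' ^ kdown k i') * x jF := by
    have := prod_pow_add x (kdown k) jF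
    rw [← heq] at this
    exact this
  have hK : (∏ i', (k i').factorial) = (∏ i', ((kdown k i').factorial)) * (kdown k jF + 1) := by
    have := prod_fact_add (kdown k) jF
    rw [← heq] at this
    exact this
  have hKc : ((∏ i', (k i').factorial : ℕ) : ℝ)
      = ((∏ i', ((kdown k i').factorial) : ℕ) : ℝ) * ((kdown k jF : ℝ) + 1) := by
    rw [hK]; push_cast; ring
  have hkjF' : k jF = kdown k jF + 1 := by
    have := congrFun heq jF
    simpa [esgl] using this
  have hKmne : ((∏ i', ((kdown k i').factorial) : ℕ) : ℝ) ≠ 0 := (prod_fact_pos _).ne'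
  by_cases hm0 : ∀ j', kdown k j' = 0
  · -- `k↓ = 0`, so `k = e_{jF}`; pure FTC case
    have hm0' : kdown k = 0 := funext hm0
    have hl1 : k jF = 1 := by rw [hkjF', hm0 jF]
    rw [remT, integral_Qmeas_dirac hm0 (continuous_deltaK hgc _ x)]
    have hone : (fun i => x i * (1 : Fin d → ℝ) i) = x := funext fun i => by simp
    simp only [deltaK, hone]
    rw [ftc_E hgd (by rw [← hpd]; exact hkc) x hjF, ← hpd,
      intervalIntegral.integral_const_mul]
    have e4 : (∫ t in (0:ℝ)..1,
          ((k jF : ℝ) * (1 - t) ^ (k jF - 1)) * mderiv k f (Epoint x (mPos k) t))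
        = ∫ t in (0:ℝ)..1, mderiv k f (Epoint x (mPos k) t) := by
      apply intervalIntegral.integral_congr
      intro t _
      simp [hl1]
    rw [e4, hX, hKc, hm0']
    simp only [Pi.zero_apply, pow_zero, Finset.prod_const_one, Nat.factorial_zero,
      Nat.cast_one, Nat.cast_zero]
    ring
  · have hmne : kdown k ≠ 0 := fun h => hm0 fun j' => by rw [h]; rfl
    obtain ⟨jF', hjF', hjF'2⟩ := mPos_spec hmne
    have hge : mPos k ≤ mPos (kdown k) := mPos_le_mPos_kdown hmne
    rcases eq_or_lt_of_le hge with hcase | hcase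
    · -- `𝔪(k↓) = 𝔪(k)`: integration by parts
      have hjFeq : jF' = jF := Fin.ext (by omega)
      rw [hjFeq] at hjF' hjF'2
      have hl2 : 2 ≤ k jF := by
        have := hjF'2
        omega
      have hmm : mPos (kdown k) = mPos k := hcase.symm
      rw [remT, integral_Qmeas_ne hm0 hjF' (continuous_deltaK hgc _ x)]
      simp only [deltaK, hmm, trunc_succ_mul_emb1 (mPos k) x,
        trunc_mul_emb1 (le_refl (mPos k)) x]
      have hder : ∀ t : ℝ, HasDerivAt (fun u => mderiv (kdown k) f (Epoint x (mPos k) u))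
          (x jF * mderiv k f (Epoint x (mPos k) t)) t := by
        intro t
        have := hasDerivAt_Epoint hgd x hjF t
        rwa [← hpd] at this
      have hφc : Continuous fun t : ℝ => x jF * mderiv k f (Epoint x (mPos k) t) :=
        continuous_const.mul (hkc.comp (continuous_Epoint x _))
      have hibp := ibp hl2 hder hφc
      have hcast : (kdown k jF : ℝ) = (k jF : ℝ) - 1 := by rw [hkjF']; push_cast; ring
      have hsub : kdown k jF - 1 = k jF - 2 := by omega
      have e1 : (∫ t in (0:ℝ)..1, ((kdown k jF : ℝ) * (1 - t) ^ (kdown k jF - 1)) *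
              (mderiv (kdown k) f (Epoint x (mPos k) t)
                - mderiv (kdown k) f (trunc (mPos k) x)))
          = ∫ t in (0:ℝ)..1, ((k jF : ℝ) - 1) * (1 - t) ^ (k jF - 2) *
              ((fun u => mderiv (kdown k) f (Epoint x (mPos k) u)) t
                - (fun u => mderiv (kdown k) f (Epoint x (mPos k) u)) 0) := by
        apply intervalIntegral.integral_congr
        intro t _
        simp only [hcast, hsub, Epoint_zero]
      rw [e1, hibp]
      have e2 : (∫ t in (0:ℝ)..1,
            (1 - t) ^ (k jF - 1) * (x jF * mderiv k f (Epoint x (mPos k) t)))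
          = x jF * ∫ t in (0:ℝ)..1, (1 - t) ^ (k jF - 1) * mderiv k f (Epoint x (mPos k) t) := by
        rw [← intervalIntegral.integral_const_mul]
        apply intervalIntegral.integral_congr
        intro t _
        ring
      have e3 : (∫ t in (0:ℝ)..1,
            ((k jF : ℝ) * (1 - t) ^ (k jF - 1)) * mderiv k f (Epoint x (mPos k) t))
          = (k jF : ℝ) * ∫ t in (0:ℝ)..1, (1 - t) ^ (k jF - 1) * mderiv k f (Epoint x (mPos k) t) := by
        rw [← intervalIntegral.integral_const_mul]
        apply intervalIntegral.integral_congr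
        intro t _
        ring
      rw [e2, e3, hX, hKc, hkjF']
      have h1 : ((kdown k jF : ℝ) + 1) ≠ 0 := by positivity
      push_cast
      field_simp
    · -- `𝔪(k↓) > 𝔪(k)`: constant integrand, then FTC
      have hmjF0 : kdown k jF = 0 := by
        by_contra h
        have := mPos_le h
        omega
      have hl1 : k jF = 1 := by rw [hkjF', hmjF0]
      rw [remT, integral_Qmeas_ne hm0 hjF' (continuous_deltaK hgc _ x)]
      simp only [deltaK, trunc_mul_emb1 (show mPos k + 1 ≤ mPos (kdown k) by omega) x,
        trunc_mul_emb1 (show mPos k ≤ mPos (kdown k) by omega) x]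
      rw [intervalIntegral.integral_mul_const, mass_one (Nat.one_le_iff_ne_zero.mpr hjF'2),
        one_mul]
      rw [ftc_E hgd (by rw [← hpd]; exact hkc) x hjF, ← hpd,
        intervalIntegral.integral_const_mul]
      have e4 : (∫ t in (0:ℝ)..1,
            ((k jF : ℝ) * (1 - t) ^ (k jF - 1)) * mderiv k f (Epoint x (mPos k) t))
          = ∫ t in (0:ℝ)..1, mderiv k f (Epoint x (mPos k) t) := by
        apply intervalIntegral.integral_congr
        intro t _
        simp [hl1]
      rw [e4, hX, hKc, hmjF0]
      simp only [Nat.cast_zero]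
      field_simp
      ring

lemma key_step (s : Fin d → ℝ) (hs : ∀ i, 0 < s i) {r : ℝ} (f : (Fin d → ℝ) → ℝ)
    (hfc : ∀ k : Fin d → ℕ, sdeg s k ≤ r → Continuous (mderiv k f))
    (hfd : ∀ k : Fin d → ℕ, sdeg s k < r → Differentiable ℝ (mderiv k f))
    (x : Fin d → ℝ) {k : Fin d → ℕ} (hk : k ≠ 0) (hdeg : sdeg s k < r) :
    remT f x k = coefT f x k +
      ∑ i ∈ Finset.univ.filter (fun i : Fin d => (i : ℕ) ≤ mPos k), remT f x (k + esgl i) := by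
  obtain ⟨jF, hjF, hkjF⟩ := mPos_spec hk
  have hkc : Continuous (mderiv k f) := hfc _ hdeg.le
  have hjlt : mPos k < d := by rw [← hjF]; exact jF.isLt
  have hsplit : Finset.univ.filter (fun i : Fin d => (i : ℕ) ≤ mPos k)
      = insert jF (Finset.univ.filter (fun i : Fin d => (i : ℕ) < mPos k)) := by
    ext i
    simp only [Finset.mem_filter, Finset.mem_insert, Finset.mem_univ, true_and]
    constructor
    · intro hi
      rcases eq_or_lt_of_le hi with h | h
      · exact Or.inl (Fin.ext (by omega))
      · exact Or.inr h
    · rintro (h | h)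
      · subst h; omega
      · exact h.le
  have hnotmem : jF ∉ Finset.univ.filter (fun i : Fin d => (i : ℕ) < mPos k) := by
    simp [hjF]
  rw [hsplit, Finset.sum_insert hnotmem, remT_eq_mPos f x hjF hkjF hkc]
  have hlt_eval : ∀ i ∈ Finset.univ.filter (fun i : Fin d => (i : ℕ) < mPos k),
      remT f x (k + esgl i) =
        (∏ i', x i' ^ k i') / ((∏ i', (k i').factorial : ℕ) : ℝ) *
          (mderiv k f (trunc ((i : ℕ) + 1) x) - mderiv k f (trunc (i : ℕ) x)) := by
    intro i hi
    exact remT_lt_mPos f x hjF hkjF hkc (Finset.mem_filter.mp hi).2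
  rw [Finset.sum_congr rfl hlt_eval, ← Finset.mul_sum]
  have htel : ∑ i ∈ Finset.univ.filter (fun i : Fin d => (i : ℕ) < mPos k),
      (mderiv k f (trunc ((i : ℕ) + 1) x) - mderiv k f (trunc (i : ℕ) x))
      = mderiv k f (trunc (mPos k) x) - mderiv k f (trunc 0 x) := by
    have h1 : ∑ i ∈ Finset.univ.filter (fun i : Fin d => (i : ℕ) < mPos k),
        (mderiv k f (trunc ((i : ℕ) + 1) x) - mderiv k f (trunc (i : ℕ) x))
        = ∑ p ∈ Finset.range (mPos k),
            (mderiv k f (trunc (p + 1) x) - mderiv k f (trunc p x)) := by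
      rw [Finset.sum_filter]
      rw [show Finset.range (mPos k) = (Finset.range d).filter (fun p => p < mPos k) by
        ext p; simp; omega]
      rw [Finset.sum_filter]
      exact Fin.sum_univ_eq_sum_range
        (fun p => if p < mPos k then
          (mderiv k f (trunc (p + 1) x) - mderiv k f (trunc p x)) else 0) d
    rw [h1, Finset.sum_range_sub (fun p => mderiv k f (trunc p x)) (mPos k)]
  rw [htel, remT_self s hs f hfc hfd x hjF hkjF hdeg, coefT, trunc_zero']
  ring

-- ### boundary set lemmas

lemma kdown_zero : kdown (0 : Fin d → ℕ) = 0 := by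
  funext i
  simp [kdown]

lemma esgl_ne_zero (i : Fin d) : esgl i ≠ (0 : Fin d → ℕ) := by
  intro h
  have := congrFun h i
  simp [esgl] at this

lemma mPos_esgl (i : Fin d) : mPos (esgl i) = (i : ℕ) := by
  apply mPos_eq
  · simp [esgl]
  · intro i' hi'
    have : i' ≠ i := by intro h; subst h; omega
    simp [esgl, this]

lemma kdown_esgl (i : Fin d) : kdown (esgl i) = 0 := by
  funext i'
  simp only [kdown, mPos_esgl]
  by_cases h : i' = i
  · subst h; simp [esgl]
  · have h2 : (i' : ℕ) ≠ (i : ℕ) := fun hc => h (Fin.ext hc)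
    simp [esgl, h, h2]

lemma mem_bdry {A : Finset (Fin d → ℕ)} (h0 : (0 : Fin d → ℕ) ∈ A) {m : Fin d → ℕ} :
    m ∈ bdry A ↔ m ∉ A ∧ kdown m ∈ A := by
  unfold bdry
  rw [Finset.mem_filter]
  constructor
  · rintro ⟨-, h⟩; exact h
  · rintro ⟨h1, h2⟩
    refine ⟨?_, h1, h2⟩
    have hmne : m ≠ 0 := by
      intro h
      subst h
      rw [kdown_zero] at h2
      exact h1 h2
    obtain ⟨jF, hjF, hkjF⟩ := mPos_spec hmne
    have heq := eq_add_esgl_of_ne_zero jF hjF hkjF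
    rw [Finset.mem_biUnion]
    refine ⟨kdown m, h2, ?_⟩
    rw [Finset.mem_image]
    refine ⟨jF, Finset.mem_univ _, ?_⟩
    funext j
    exact (congrFun heq j).symm

lemma esgl_injective : Function.Injective (esgl (d := d)) := by
  intro i i' h
  by_contra hne
  have := congrFun h i
  simp [esgl, hne] at this

/-- Anisotropic Taylor formula with increment-form remainder.
Let `A ⊆ {k : |k|_s < r}` be a nonempty downward-closed set of multi-indices and let `f`
have continuous partial derivatives `∂^k` for all `|k|_s ≤ r`.  Then
`f(x) = Σ_{k∈A} ∂^k f(0) x^k / k!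
  + Σ_{k∈∂A} (x^{k↓}/k↓!) ∫ δ_k[∂^{k↓}f]((xᵢyᵢ)ᵢ) Q^{k↓}(dy)`. -/
theorem anisotropic_taylor (d : ℕ) (hd : 1 ≤ d) (s : Fin d → ℝ) (hs : ∀ i, 0 < s i)
    (r : ℝ) (hr : 0 < r)
    (A : Finset (Fin d → ℕ)) (hA : A.Nonempty)
    (hAdeg : ∀ k ∈ A, sdeg s k < r)
    (hAdc : ∀ k ∈ A, ∀ l : Fin d → ℕ, l ≤ k → l ∈ A)
    (f : (Fin d → ℝ) → ℝ)
    (hfc : ∀ k : Fin d → ℕ, sdeg s k ≤ r → Continuous (mderiv k f))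
    (hfd : ∀ k : Fin d → ℕ, sdeg s k < r → Differentiable ℝ (mderiv k f)) :
    ∀ x : Fin d → ℝ,
      f x =
        (∑ k ∈ A, (((∏ i, (k i).factorial : ℕ) : ℝ))⁻¹ * mderiv k f 0 * ∏ i, x i ^ k i) +
          ∑ k ∈ bdry A,
            ((∏ i, x i ^ kdown k i) / ((∏ i, (kdown k i).factorial : ℕ) : ℝ)) *
              ∫ y : Fin d → ℝ,
                deltaK k (mderiv (kdown k) f) (fun i => x i * y i) ∂ Qmeas (kdown k) := by
  have goaleq : ∀ x : Fin d → ℝ,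
      ((∑ k ∈ A, (((∏ i, (k i).factorial : ℕ) : ℝ))⁻¹ * mderiv k f 0 * ∏ i, x i ^ k i) +
          ∑ k ∈ bdry A,
            ((∏ i, x i ^ kdown k i) / ((∏ i, (kdown k i).factorial : ℕ) : ℝ)) *
              ∫ y : Fin d → ℝ,
                deltaK k (mderiv (kdown k) f) (fun i => x i * y i) ∂ Qmeas (kdown k))
        = (∑ k ∈ A, coefT f x k) + ∑ k ∈ bdry A, remT f x k := fun x => rfl
  intro x
  rw [goaleq x]
  have main : ∀ n : ℕ, ∀ A : Finset (Fin d → ℕ), A.card ≤ n → A.Nonempty →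
      (∀ k ∈ A, sdeg s k < r) → (∀ k ∈ A, ∀ l : Fin d → ℕ, l ≤ k → l ∈ A) →
      ∀ x : Fin d → ℝ,
        f x = (∑ k ∈ A, coefT f x k) + ∑ k ∈ bdry A, remT f x k := by
    intro n
    induction n with
    | zero =>
      intro A hcard hne _ _ _
      have := hne.card_pos
      omega
    | succ n ih =>
      intro A hcard hne hAdeg hAdc x
      have h0A : (0 : Fin d → ℕ) ∈ A := by
        obtain ⟨a, ha⟩ := hne
        exact hAdc a ha 0 (fun i => Nat.zero_le _)
      by_cases hA0 : A = {0}
      · -- base case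
        subst hA0
        have hb : bdry ({0} : Finset (Fin d → ℕ)) = Finset.univ.image esgl := by
          ext m
          rw [mem_bdry h0A, Finset.mem_image]
          simp only [Finset.mem_singleton]
          constructor
          · rintro ⟨h1, h2⟩
            obtain ⟨jF, hjF, hkjF⟩ := mPos_spec h1
            refine ⟨jF, Finset.mem_univ _, ?_⟩
            rw [eq_add_esgl_of_ne_zero jF hjF hkjF, h2, zero_add]
          · rintro ⟨i, -, rfl⟩
            exact ⟨esgl_ne_zero i, kdown_esgl i⟩
        have hremT : ∀ i : Fin d, remT f x (esgl i)
            = f (trunc ((i : ℕ) + 1) x) - f (trunc (i : ℕ) x) := by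
          intro i
          have h0c : Continuous (mderiv (0 : Fin d → ℕ) f) := hfc 0 (by rw [sdeg_zero]; exact hr.le)
          rw [remT, kdown_esgl i, integral_Qmeas_dirac (m := (0 : Fin d → ℕ)) (fun j => rfl)
            (continuous_deltaK h0c _ x)]
          have hone : (fun i' => x i' * (1 : Fin d → ℝ) i') = x := funext fun i' => by simp
          simp only [deltaK, hone, mPos_esgl, mderiv_zero, Pi.zero_apply, pow_zero,
            Finset.prod_const_one, Nat.factorial_zero, Nat.cast_one]
          ring
        rw [Finset.sum_singleton, hb, Finset.sum_image (fun i _ i' _ h => esgl_injective h)]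
        have hsum : ∑ i : Fin d, remT f x (esgl i) = f x - f 0 := by
          rw [Finset.sum_congr rfl fun i _ => hremT i]
          have := Fin.sum_univ_eq_sum_range
            (fun p => f (trunc (p + 1) x) - f (trunc p x)) d
          rw [this, Finset.sum_range_sub (fun p => f (trunc p x)) d, trunc_self, trunc_zero']
        rw [hsum, coefT, mderiv_zero]
        simp only [Pi.zero_apply, pow_zero, Finset.prod_const_one, Nat.factorial_zero,
          Nat.cast_one]
        ring
      · -- inductive step
        obtain ⟨a, ha, hane⟩ : ∃ a ∈ A, a ≠ 0 := by
          by_contra h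
          push_neg at h
          apply hA0
          apply Finset.eq_singleton_iff_unique_mem.mpr
          exact ⟨h0A, fun y hy => h y hy⟩
        have hBne : (A.erase 0).Nonempty := ⟨a, Finset.mem_erase.mpr ⟨hane, ha⟩⟩
        obtain ⟨k, hkB, hkmax⟩ := Finset.exists_max_image (A.erase 0) (sdeg s) hBne
        have hkA : k ∈ A := Finset.mem_of_mem_erase hkB
        have hkne : k ≠ 0 := (Finset.mem_erase.mp hkB).1
        have hmax : ∀ k' ∈ A, k ≤ k' → k' = k := by
          intro k' hk' hle
          have hk'ne : k' ≠ 0 := by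
            intro h
            subst h
            apply hkne
            funext i
            simpa using hle i
          have h1 : sdeg s k' ≤ sdeg s k :=
            hkmax k' (Finset.mem_erase.mpr ⟨hk'ne, hk'⟩)
          exact (eq_of_le_of_sdeg_le hs hle h1).symm
        have h0A' : (0 : Fin d → ℕ) ∈ A.erase k :=
          Finset.mem_erase.mpr ⟨Ne.symm hkne, h0A⟩
        have hA'dc : ∀ k' ∈ A.erase k, ∀ l : Fin d → ℕ, l ≤ k' → l ∈ A.erase k := by
          intro k' hk' l hle
          have hk'A := Finset.mem_of_mem_erase hk'
          refine Finset.mem_erase.mpr ⟨?_, hAdc k' hk'A l hle⟩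
          intro hlk
          subst hlk
          exact (Finset.mem_erase.mp hk').1 (hmax k' hk'A hle)
        have hkdownA' : kdown k ∈ A.erase k := by
          refine Finset.mem_erase.mpr ⟨?_, hAdc k hkA _ (kdown_le k)⟩
          obtain ⟨jF, hjF, hkjF⟩ := mPos_spec hkne
          intro h
          have h1 := congrFun h jF
          have h2 : kdown k jF = k jF - 1 := by simp [kdown, hjF]
          omega
        have hcard' : (A.erase k).card ≤ n := by
          rw [Finset.card_erase_of_mem hkA]
          have := hne.card_pos
          omega
        have ihA' := ih (A.erase k) hcard' ⟨0, h0A'⟩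
          (fun k' hk' => hAdeg k' (Finset.mem_of_mem_erase hk')) hA'dc x
        have hkdeg := hAdeg k hkA
        have hkey := key_step s hs f hfc hfd x hkne hkdeg
        have hbdryA' : k ∈ bdry (A.erase k) :=
          (mem_bdry h0A').mpr ⟨Finset.notMem_erase k A, hkdownA'⟩
        have hE1 : (bdry (A.erase k)).erase k
            = (bdry A).filter (fun m => ¬ kdown m = k) := by
          ext m
          rw [Finset.mem_erase, mem_bdry h0A', Finset.mem_filter, mem_bdry h0A]
          constructor
          · rintro ⟨hmk, hmA', hmdA'⟩
            exact ⟨⟨fun hmA => hmA' (Finset.mem_erase.mpr ⟨hmk, hmA⟩),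
              Finset.mem_of_mem_erase hmdA'⟩, (Finset.mem_erase.mp hmdA').1⟩
          · rintro ⟨⟨hmA, hmd⟩, hmdk⟩
            exact ⟨fun h => hmA (h ▸ hkA), fun h => hmA (Finset.mem_of_mem_erase h),
              Finset.mem_erase.mpr ⟨hmdk, hmd⟩⟩
        have hE2 : (bdry A).filter (fun m => kdown m = k)
            = (Finset.univ.filter (fun i : Fin d => (i : ℕ) ≤ mPos k)).image
                (fun i => k + esgl i) := by
          ext m
          rw [Finset.mem_filter, mem_bdry h0A, Finset.mem_image]
          constructor
          · rintro ⟨⟨hmA, hmd⟩, hmdk⟩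
            have hmne : m ≠ 0 := by
              intro h
              subst h
              rw [kdown_zero] at hmdk
              exact hkne hmdk.symm
            obtain ⟨iF, hiF, hiF2⟩ := mPos_spec hmne
            refine ⟨iF, Finset.mem_filter.mpr ⟨Finset.mem_univ _, ?_⟩, ?_⟩
            · have h1 : kdown m ≠ 0 := by rw [hmdk]; exact hkne
              have h2 := mPos_le_mPos_kdown h1
              rw [hmdk] at h2
              omega
            · rw [← hmdk]
              exact (eq_add_esgl_of_ne_zero iF hiF hiF2).symm
          · rintro ⟨i, hi, rfl⟩
            have hile : (i : ℕ) ≤ mPos k := (Finset.mem_filter.mp hi).2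
            refine ⟨⟨?_, ?_⟩, kdown_add_esgl hile⟩
            · intro hmem
              have h2 : (k + esgl i) ≠ 0 := by
                intro h
                have := congrFun h i
                simp [esgl] at this
              have h3 := hkmax _ (Finset.mem_erase.mpr ⟨h2, hmem⟩)
              rw [sdeg_add_esgl] at h3
              have hle : k ≤ k + esgl i := by
                intro j
                simp only [Pi.add_apply, esgl]
                omega
              have h4 := hmax _ hmem hle
              have := congrFun h4 i
              simp [esgl] at this
            · rw [kdown_add_esgl hile]
              exact hkA
        have hinj : ∀ i ∈ Finset.univ.filter (fun i : Fin d => (i : ℕ) ≤ mPos k),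
            ∀ i' ∈ Finset.univ.filter (fun i : Fin d => (i : ℕ) ≤ mPos k),
            k + esgl i = k + esgl i' → i = i' := by
          intro i _ i' _ h
          apply esgl_injective
          funext j
          have := congrFun h j
          simp only [Pi.add_apply] at this
          omega
        have hsum1 : ∑ m ∈ bdry (A.erase k), remT f x m
            = remT f x k + ∑ m ∈ (bdry (A.erase k)).erase k, remT f x m :=
          (Finset.add_sum_erase _ _ hbdryA').symm
        have hsum2 : ∑ k' ∈ A, coefT f x k'
            = coefT f x k + ∑ k' ∈ A.erase k, coefT f x k' :=
          (Finset.add_sum_erase _ _ hkA).symm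
        have hsum3 : ∑ m ∈ bdry A, remT f x m
            = (∑ i ∈ Finset.univ.filter (fun i : Fin d => (i : ℕ) ≤ mPos k),
                remT f x (k + esgl i))
              + ∑ m ∈ (bdry (A.erase k)).erase k, remT f x m := by
          rw [← Finset.sum_filter_add_sum_filter_not (bdry A) (fun m => kdown m = k)]
          congr 1
          · rw [hE2, Finset.sum_image hinj]
          · rw [hE1]
        rw [ihA', hsum1, hkey, hsum2, hsum3]
        ring
  exact main A.card A le_rfl hA hAdeg hAdc x


end AnisoTaylor
end
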